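/- arXiv:2511.16488 — 3 statements merged into one kernel-verified Lean document; each statement's English description precedes it below -/
import Mathlib

section
/- Decidability of END: the set of modal formulas derivable in the logic END is decidable, i.e., the predicate 'A is derivable in END' on modal formulas is a decidable predicate. -/
/-- Modal formulas: propositional variables, ⊥, ¬, ∧, ∨, →, □. -/
inductive MF : Type
  | var : ℕ → MF
  | bot : MF
  | neg : MF → MF
  | and : MF → MF → MF
  | or : MF → MF → MF
  | imp : MF → MF → MF
  | box : MF → MF

/-- Defined biconditional A ↔ B := (A → B) ∧ (B → A). -/
def MF.iff (A B : MF) : MF := (A.imp B).and (B.imp A)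

/-- Propositional evaluation: variables and boxed formulas are treated as atoms. -/
def MF.peval (v : MF → Bool) : MF → Bool
  | .var n => v (.var n)
  | .bot => false
  | .neg A => !(A.peval v)
  | .and A B => A.peval v && B.peval v
  | .or A B => A.peval v || B.peval v
  | .imp A B => !(A.peval v) || B.peval v
  | .box A => v A.box

/-- A is a propositional tautology. -/
def MF.Tautology (A : MF) : Prop := ∀ v : MF → Bool, A.peval v = true

/-- The logic END: EN plus the axiom scheme ¬(□A ∧ □¬A). -/
inductive END : MF → Prop
  | taut {A : MF} : A.Tautology → END A
  | axD {A : MF} : END (A.box.and A.neg.box).neg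
  | mp {A B : MF} : END (A.imp B) → END A → END B
  | nec {A : MF} : END A → END A.box
  | re {A B : MF} : END (A.iff B) → END (A.box.iff B.box)

/-- An injective Gödel numbering of modal formulas, via the pairing function. -/
def encodeMF : MF → ℕ
  | .var n => Nat.pair 0 n
  | .bot => Nat.pair 1 0
  | .neg A => Nat.pair 2 (encodeMF A)
  | .and A B => Nat.pair 3 (Nat.pair (encodeMF A) (encodeMF B))
  | .or A B => Nat.pair 4 (Nat.pair (encodeMF A) (encodeMF B))
  | .imp A B => Nat.pair 5 (Nat.pair (encodeMF A) (encodeMF B))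
  | .box A => Nat.pair 6 (encodeMF A)

deriving instance DecidableEq for MF

namespace ENDdec

/-! ### pairing facts -/

theorem pair_le_pair {a a' b b' : ℕ} (ha : a ≤ a') (hb : b ≤ b') :
    Nat.pair a b ≤ Nat.pair a' b' := by
  calc Nat.pair a b ≤ Nat.pair a' b := by
        rcases Nat.lt_or_ge a a' with h | h
        · exact le_of_lt (Nat.pair_lt_pair_left _ h)
        · have : a = a' := le_antisymm ha h; simp [this]
    _ ≤ Nat.pair a' b' := by
        rcases Nat.lt_or_ge b b' with h | h
        · exact le_of_lt (Nat.pair_lt_pair_right _ h)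
        · have : b = b' := le_antisymm hb h; simp [this]

theorem lt_pair {k x : ℕ} (hk : 1 ≤ k) : x < Nat.pair k x :=
  lt_of_lt_of_le (by omega) (Nat.add_le_pair k x)

theorem unpair_snd_lt {n : ℕ} (h : 1 ≤ n.unpair.1) : n.unpair.2 < n := by
  conv_rhs => rw [← Nat.pair_unpair n]
  exact lt_pair h

/-! ### decoding -/

def decodeF : ℕ → ℕ → Option MF
  | 0, _ => none
  | fuel+1, n =>
    let t := n.unpair.1
    let r := n.unpair.2
    if t = 0 then some (.var r)
    else if t = 1 then (if r = 0 then some .bot else none)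
    else if t = 2 then (decodeF fuel r).map .neg
    else if t = 3 then
      (decodeF fuel r.unpair.1).bind fun A => (decodeF fuel r.unpair.2).map A.and
    else if t = 4 then
      (decodeF fuel r.unpair.1).bind fun A => (decodeF fuel r.unpair.2).map A.or
    else if t = 5 then
      (decodeF fuel r.unpair.1).bind fun A => (decodeF fuel r.unpair.2).map A.imp
    else if t = 6 then (decodeF fuel r).map .box
    else none

theorem decodeF_stable : ∀ n f f', n < f → n < f' → decodeF f n = decodeF f' n := by
  intro n
  induction n using Nat.strong_induction_on with
  | _ n IH =>
    intro f f' hf hf'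
    obtain ⟨g, rfl⟩ : ∃ g, f = g + 1 := ⟨f - 1, by omega⟩
    obtain ⟨g', rfl⟩ : ∃ g', f' = g' + 1 := ⟨f' - 1, by omega⟩
    simp only [decodeF]
    have h2 : n.unpair.2 < n ∨ n.unpair.1 = 0 := by
      rcases Nat.eq_zero_or_pos n.unpair.1 with h | h
      · exact Or.inr h
      · exact Or.inl (unpair_snd_lt h)
    have h31 : n.unpair.2.unpair.1 ≤ n.unpair.2 := Nat.unpair_left_le _
    have h32 : n.unpair.2.unpair.2 ≤ n.unpair.2 := Nat.unpair_right_le _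
    rcases h2 with h2 | h0
    · have e1 : decodeF g n.unpair.2 = decodeF g' n.unpair.2 :=
        IH _ h2 _ _ (by omega) (by omega)
      have e2 : decodeF g n.unpair.2.unpair.1 = decodeF g' n.unpair.2.unpair.1 :=
        IH _ (by omega) _ _ (by omega) (by omega)
      have e3 : decodeF g n.unpair.2.unpair.2 = decodeF g' n.unpair.2.unpair.2 :=
        IH _ (by omega) _ _ (by omega) (by omega)
      rw [e1, e2, e3]
    · simp [h0]

def decodeMF (n : ℕ) : Option MF := decodeF (n+1) n

/-- one-step unfolding of `decodeMF` -/
theorem decodeMF_eq (n : ℕ) : decodeMF n =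
    (let t := n.unpair.1
     let r := n.unpair.2
     if t = 0 then some (.var r)
     else if t = 1 then (if r = 0 then some .bot else none)
     else if t = 2 then (decodeMF r).map .neg
     else if t = 3 then
       (decodeMF r.unpair.1).bind fun A => (decodeMF r.unpair.2).map A.and
     else if t = 4 then
       (decodeMF r.unpair.1).bind fun A => (decodeMF r.unpair.2).map A.or
     else if t = 5 then
       (decodeMF r.unpair.1).bind fun A => (decodeMF r.unpair.2).map A.imp
     else if t = 6 then (decodeMF r).map .box
     else none) := by
  show decodeF (n+1) n = _
  simp only [decodeF]
  rcases Nat.eq_zero_or_pos n.unpair.1 with h0 | h1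
  · simp [h0]
  · have h2 : n.unpair.2 < n := unpair_snd_lt h1
    have h31 : n.unpair.2.unpair.1 ≤ n.unpair.2 := Nat.unpair_left_le _
    have h32 : n.unpair.2.unpair.2 ≤ n.unpair.2 := Nat.unpair_right_le _
    rw [decodeF_stable n.unpair.2 n (n.unpair.2+1) (by omega) (by omega),
        decodeF_stable n.unpair.2.unpair.1 n (n.unpair.2.unpair.1+1) (by omega) (by omega),
        decodeF_stable n.unpair.2.unpair.2 n (n.unpair.2.unpair.2+1) (by omega) (by omega)]
    rfl

theorem decodeMF_encode (A : MF) : decodeMF (encodeMF A) = some A := by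
  induction A with
  | var n => rw [decodeMF_eq]; simp [encodeMF, Nat.unpair_pair]
  | bot => rw [decodeMF_eq]; simp [encodeMF, Nat.unpair_pair]
  | neg A ih => rw [decodeMF_eq]; simp [encodeMF, Nat.unpair_pair, ih]
  | and A B ihA ihB => rw [decodeMF_eq]; simp [encodeMF, Nat.unpair_pair, ihA, ihB]
  | or A B ihA ihB => rw [decodeMF_eq]; simp [encodeMF, Nat.unpair_pair, ihA, ihB]
  | imp A B ihA ihB => rw [decodeMF_eq]; simp [encodeMF, Nat.unpair_pair, ihA, ihB]
  | box A ih => rw [decodeMF_eq]; simp [encodeMF, Nat.unpair_pair, ih]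

theorem encode_decodeMF : ∀ n A, decodeMF n = some A → encodeMF A = n := by
  intro n
  induction n using Nat.strong_induction_on with
  | _ n IH =>
    intro A h
    rw [decodeMF_eq] at h
    have hpu : Nat.pair n.unpair.1 n.unpair.2 = n := Nat.pair_unpair n
    by_cases h0 : n.unpair.1 = 0
    · simp only [h0, if_pos rfl] at h
      cases h
      show Nat.pair 0 n.unpair.2 = n
      rw [← h0]; exact hpu
    · have h1pos : 1 ≤ n.unpair.1 := by omega
      have h2 : n.unpair.2 < n := unpair_snd_lt h1pos
      have h31 : n.unpair.2.unpair.1 < n := by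
        have := Nat.unpair_left_le n.unpair.2; omega
      have h32 : n.unpair.2.unpair.2 < n := by
        have := Nat.unpair_right_le n.unpair.2; omega
      have hpu2 : Nat.pair n.unpair.2.unpair.1 n.unpair.2.unpair.2 = n.unpair.2 :=
        Nat.pair_unpair _
      by_cases ht1 : n.unpair.1 = 1
      · simp only [h0, ht1, if_neg, if_pos rfl, reduceIte] at h
        by_cases hr : n.unpair.2 = 0
        · simp only [hr, if_pos rfl] at h
          cases h
          show Nat.pair 1 0 = n
          rw [← ht1, ← hr]; exact hpu
        · simp [hr] at h
      · by_cases ht2 : n.unpair.1 = 2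
        · simp only [h0, ht1, ht2, reduceIte] at h
          obtain ⟨B, hB, rfl⟩ := Option.map_eq_some_iff.1 h
          show Nat.pair 2 (encodeMF B) = n
          rw [IH _ h2 _ hB, ← ht2]; exact hpu
        · by_cases ht3 : n.unpair.1 = 3
          · simp only [h0, ht1, ht2, ht3, reduceIte] at h
            cases hB : decodeMF n.unpair.2.unpair.1 with
            | none => rw [hB] at h; simp at h
            | some B =>
            rw [hB] at h
            cases hC : decodeMF n.unpair.2.unpair.2 with
            | none => rw [hC] at h; simp at h
            | some C =>
            rw [hC] at h; simp only [Option.bind_some, Option.map_some] at h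
            cases h
            show Nat.pair 3 (Nat.pair (encodeMF B) (encodeMF C)) = n
            rw [IH _ h31 _ hB, IH _ h32 _ hC, hpu2, ← ht3]; exact hpu
          · by_cases ht4 : n.unpair.1 = 4
            · simp only [h0, ht1, ht2, ht3, ht4, reduceIte] at h
              cases hB : decodeMF n.unpair.2.unpair.1 with
              | none => rw [hB] at h; simp at h
              | some B =>
              rw [hB] at h
              cases hC : decodeMF n.unpair.2.unpair.2 with
              | none => rw [hC] at h; simp at h
              | some C =>
              rw [hC] at h; simp only [Option.bind_some, Option.map_some] at h
              cases h
              show Nat.pair 4 (Nat.pair (encodeMF B) (encodeMF C)) = n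
              rw [IH _ h31 _ hB, IH _ h32 _ hC, hpu2, ← ht4]; exact hpu
            · by_cases ht5 : n.unpair.1 = 5
              · simp only [h0, ht1, ht2, ht3, ht4, ht5, reduceIte] at h
                cases hB : decodeMF n.unpair.2.unpair.1 with
                | none => rw [hB] at h; simp at h
                | some B =>
                rw [hB] at h
                cases hC : decodeMF n.unpair.2.unpair.2 with
                | none => rw [hC] at h; simp at h
                | some C =>
                rw [hC] at h; simp only [Option.bind_some, Option.map_some] at h
                cases h
                show Nat.pair 5 (Nat.pair (encodeMF B) (encodeMF C)) = n
                rw [IH _ h31 _ hB, IH _ h32 _ hC, hpu2, ← ht5]; exact hpu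
              · by_cases ht6 : n.unpair.1 = 6
                · simp only [h0, ht1, ht2, ht3, ht4, ht5, ht6, reduceIte] at h
                  obtain ⟨B, hB, rfl⟩ := Option.map_eq_some_iff.1 h
                  show Nat.pair 6 (encodeMF B) = n
                  rw [IH _ h2 _ hB, ← ht6]; exact hpu
                · simp [h0, ht1, ht2, ht3, ht4, ht5, ht6] at h

/-! ### encode inequalities -/

theorem encode_neg_lt (A : MF) : encodeMF A < encodeMF A.neg := lt_pair (by norm_num)
theorem encode_box_lt (A : MF) : encodeMF A < encodeMF A.box := lt_pair (by norm_num)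

/-! ### modal depth -/

def mdepth : MF → ℕ
  | .var _ => 0
  | .bot => 0
  | .neg A => mdepth A
  | .and A B => max (mdepth A) (mdepth B)
  | .or A B => max (mdepth A) (mdepth B)
  | .imp A B => max (mdepth A) (mdepth B)
  | .box A => mdepth A + 1

theorem mdepth_iff (A B : MF) : mdepth (A.iff B) = max (mdepth A) (mdepth B) := by
  simp [MF.iff, mdepth]; omega

theorem mdepth_le_encode (A : MF) : mdepth A ≤ encodeMF A := by
  induction A with
  | var n => simp [mdepth]
  | bot => simp [mdepth]
  | neg A ih =>
    calc mdepth A.neg = mdepth A := rfl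
    _ ≤ encodeMF A := ih
    _ ≤ encodeMF A.neg := le_of_lt (encode_neg_lt A)
  | and A B ihA ihB =>
    have hA : encodeMF A ≤ encodeMF (A.and B) :=
      le_trans (Nat.left_le_pair _ _) (Nat.right_le_pair 3 _)
    have hB : encodeMF B ≤ encodeMF (A.and B) :=
      le_trans (Nat.right_le_pair _ _) (Nat.right_le_pair 3 _)
    show max (mdepth A) (mdepth B) ≤ _
    omega
  | or A B ihA ihB =>
    have hA : encodeMF A ≤ encodeMF (A.or B) :=
      le_trans (Nat.left_le_pair _ _) (Nat.right_le_pair 4 _)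
    have hB : encodeMF B ≤ encodeMF (A.or B) :=
      le_trans (Nat.right_le_pair _ _) (Nat.right_le_pair 4 _)
    show max (mdepth A) (mdepth B) ≤ _
    omega
  | imp A B ihA ihB =>
    have hA : encodeMF A ≤ encodeMF (A.imp B) :=
      le_trans (Nat.left_le_pair _ _) (Nat.right_le_pair 5 _)
    have hB : encodeMF B ≤ encodeMF (A.imp B) :=
      le_trans (Nat.right_le_pair _ _) (Nat.right_le_pair 5 _)
    show max (mdepth A) (mdepth B) ≤ _
    omega
  | box A ih =>
    show mdepth A + 1 ≤ Nat.pair 6 (encodeMF A)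
    have := Nat.add_le_pair 6 (encodeMF A)
    omega

/-! ### atoms -/

def atomsL : MF → List MF
  | .var n => [.var n]
  | .bot => []
  | .neg A => atomsL A
  | .and A B => atomsL A ++ atomsL B
  | .or A B => atomsL A ++ atomsL B
  | .imp A B => atomsL A ++ atomsL B
  | .box A => [A.box]

theorem peval_congr {v w : MF → Bool} :
    ∀ {A : MF}, (∀ a ∈ atomsL A, v a = w a) → MF.peval v A = MF.peval w A := by
  intro A
  induction A with
  | var n => intro h; exact h _ (by simp [atomsL])
  | bot => intro _; rfl
  | neg A ih => intro h; show (!MF.peval v A) = !MF.peval w A; rw [ih h]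
  | and A B ihA ihB =>
    intro h
    show (MF.peval v A && _) = (MF.peval w A && _)
    rw [ihA fun a ha => h a (by simp [atomsL, ha]),
        ihB fun a ha => h a (by simp [atomsL, ha])]
  | or A B ihA ihB =>
    intro h
    show (MF.peval v A || _) = (MF.peval w A || _)
    rw [ihA fun a ha => h a (by simp [atomsL, ha]),
        ihB fun a ha => h a (by simp [atomsL, ha])]
  | imp A B ihA ihB =>
    intro h
    show (!MF.peval v A || _) = (!MF.peval w A || _)
    rw [ihA fun a ha => h a (by simp [atomsL, ha]),
        ihB fun a ha => h a (by simp [atomsL, ha])]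
  | box A ih => intro h; exact h _ (by simp [atomsL])

theorem atoms_shape : ∀ {A a : MF}, a ∈ atomsL A → (∃ n, a = .var n) ∨ (∃ B : MF, a = B.box) := by
  intro A
  induction A with
  | var n => intro a h; simp [atomsL] at h; exact Or.inl ⟨n, h⟩
  | bot => intro a h; simp [atomsL] at h
  | neg A ih => exact ih
  | and A B ihA ihB => intro a h; rcases List.mem_append.1 h with h | h; exacts [ihA h, ihB h]
  | or A B ihA ihB => intro a h; rcases List.mem_append.1 h with h | h; exacts [ihA h, ihB h]
  | imp A B ihA ihB => intro a h; rcases List.mem_append.1 h with h | h; exacts [ihA h, ihB h]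
  | box A ih => intro a h; simp [atomsL] at h; exact Or.inr ⟨A, h⟩

theorem mdepth_atoms {A a : MF} (h : a ∈ atomsL A) : mdepth a ≤ mdepth A := by
  induction A with
  | var n => simp [atomsL] at h; subst h; rfl
  | bot => simp [atomsL] at h
  | neg A ih => exact ih h
  | and A B ihA ihB =>
    rcases List.mem_append.1 h with h | h
    · exact le_trans (ihA h) (by simp [mdepth])
    · exact le_trans (ihB h) (by simp [mdepth])
  | or A B ihA ihB =>
    rcases List.mem_append.1 h with h | h
    · exact le_trans (ihA h) (by simp [mdepth])
    · exact le_trans (ihB h) (by simp [mdepth])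
  | imp A B ihA ihB =>
    rcases List.mem_append.1 h with h | h
    · exact le_trans (ihA h) (by simp [mdepth])
    · exact le_trans (ihB h) (by simp [mdepth])
  | box A ih => simp [atomsL] at h; subst h; rfl

theorem encode_atoms {A a : MF} (h : a ∈ atomsL A) : encodeMF a ≤ encodeMF A := by
  induction A with
  | var n => simp [atomsL] at h; subst h; rfl
  | bot => simp [atomsL] at h
  | neg A ih => exact le_trans (ih h) (le_of_lt (encode_neg_lt A))
  | and A B ihA ihB =>
    rcases List.mem_append.1 h with h | h
    · exact le_trans (ihA h) (le_trans (Nat.left_le_pair _ _) (Nat.right_le_pair 3 _))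
    · exact le_trans (ihB h) (le_trans (Nat.right_le_pair _ _) (Nat.right_le_pair 3 _))
  | or A B ihA ihB =>
    rcases List.mem_append.1 h with h | h
    · exact le_trans (ihA h) (le_trans (Nat.left_le_pair _ _) (Nat.right_le_pair 4 _))
    · exact le_trans (ihB h) (le_trans (Nat.right_le_pair _ _) (Nat.right_le_pair 4 _))
  | imp A B ihA ihB =>
    rcases List.mem_append.1 h with h | h
    · exact le_trans (ihA h) (le_trans (Nat.left_le_pair _ _) (Nat.right_le_pair 5 _))
    · exact le_trans (ihB h) (le_trans (Nat.right_le_pair _ _) (Nat.right_le_pair 5 _))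
  | box A ih => simp [atomsL] at h; subst h; rfl

/-- arguments of boxed atoms -/
def boxargs (A : MF) : List MF :=
  (atomsL A).flatMap fun a => match a with | .box B => [B] | _ => []

theorem mem_boxargs {A B : MF} : B ∈ boxargs A ↔ B.box ∈ atomsL A := by
  constructor
  · intro h
    obtain ⟨a, ha, hB⟩ := List.mem_flatMap.1 h
    match a, hB with
    | .box C, hB => simp at hB; subst hB; exact ha
  · intro h
    exact List.mem_flatMap.2 ⟨B.box, h, by simp⟩

theorem mdepth_boxargs {A B : MF} (h : B ∈ boxargs A) : mdepth B < mdepth A := by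
  have := mdepth_atoms (mem_boxargs.1 h)
  simp [mdepth] at this; omega

theorem encode_boxargs {A B : MF} (h : B ∈ boxargs A) : encodeMF B < encodeMF A :=
  lt_of_lt_of_le (encode_box_lt B) (encode_atoms (mem_boxargs.1 h))

theorem boxargs_nil {A : MF} (h : mdepth A = 0) : boxargs A = [] := by
  rcases hb : boxargs A with _ | ⟨B, l⟩
  · rfl
  · exfalso
    have : B ∈ boxargs A := by rw [hb]; simp
    have := mdepth_boxargs this
    omega

/-! ### tautology checking -/

def natOfBits : List Bool → ℕ
  | [] => 0
  | b :: l => (cond b 1 0) + 2 * natOfBits l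

theorem natOfBits_lt : ∀ l : List Bool, natOfBits l < 2 ^ l.length := by
  intro l
  induction l with
  | nil => simp [natOfBits]
  | cons b l ih =>
    simp only [natOfBits, List.length_cons, pow_succ]
    cases b <;> simp <;> omega

theorem testBit_natOfBits : ∀ (l : List Bool) (i : ℕ),
    (natOfBits l).testBit i = l.getD i false := by
  intro l
  induction l with
  | nil => intro i; simp [natOfBits]
  | cons b l ih =>
    intro i
    cases i with
    | zero =>
      simp only [Nat.testBit_zero, natOfBits, List.getD]
      cases b <;> simp <;> omega
    | succ i =>
      have h : (cond b 1 0 + 2 * natOfBits l) / 2 = natOfBits l := by cases b <;> simp <;> omega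
      simp only [natOfBits, Nat.testBit_succ, h, ih, List.getD_cons_succ]

def pevalT (l : List MF) (k : ℕ) : MF → Bool
  | .var n => k.testBit (l.idxOf (.var n))
  | .bot => false
  | .neg A => !(pevalT l k A)
  | .and A B => pevalT l k A && pevalT l k B
  | .or A B => pevalT l k A || pevalT l k B
  | .imp A B => !(pevalT l k A) || pevalT l k B
  | .box A => k.testBit (l.idxOf A.box)

theorem pevalT_eq (l : List MF) (k : ℕ) :
    ∀ A, pevalT l k A = MF.peval (fun a => k.testBit (l.idxOf a)) A := by
  intro A
  induction A with
  | var n => rfl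
  | bot => rfl
  | neg A ih => simp [pevalT, MF.peval, ih]
  | and A B ihA ihB => simp [pevalT, MF.peval, ihA, ihB]
  | or A B ihA ihB => simp [pevalT, MF.peval, ihA, ihB]
  | imp A B ihA ihB => simp [pevalT, MF.peval, ihA, ihB]
  | box A ih => rfl

theorem foldr_and_eq_true {p : ℕ → Bool} :
    ∀ l : List ℕ, (l.foldr (fun x b => p x && b) true = true) ↔ ∀ x ∈ l, p x = true := by
  intro l
  induction l with
  | nil => simp
  | cons x l ih => simp [ih]

def tautB (A : MF) : Bool :=
  (List.range (2 ^ (atomsL A).length)).foldr (fun k b => pevalT (atomsL A) k A && b) true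

theorem tautB_iff (A : MF) : tautB A = true ↔ A.Tautology := by
  rw [tautB, foldr_and_eq_true]
  constructor
  · intro h v
    set l := atomsL A with hl
    have hk := h (natOfBits (l.map v)) (by
      simp only [List.mem_range]
      have := natOfBits_lt (l.map v)
      simpa using this)
    rw [pevalT_eq] at hk
    rw [← hk]
    apply peval_congr
    intro a ha
    rw [testBit_natOfBits]
    have hlt : l.idxOf a < l.length := List.idxOf_lt_length_iff.2 ha
    rw [List.getD_eq_getElem?_getD, List.getElem?_map]
    simp [List.getElem?_eq_getElem hlt, List.getElem_idxOf hlt]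
  · intro h k _
    rw [pevalT_eq]
    exact h _

/-! ### END utilities -/

theorem END.mp2 {A B C : MF} (h : END (A.imp (B.imp C))) (hA : END A) (hB : END B) : END C :=
  END.mp (END.mp h hA) hB

def tval : MF → Bool
  | .var _ => false
  | .bot => false
  | .neg A => !tval A
  | .and A B => tval A && tval B
  | .or A B => tval A || tval B
  | .imp A B => !tval A || tval B
  | .box A => tval A

theorem tval_peval : ∀ A, MF.peval tval A = tval A := by
  intro A
  induction A with
  | var n => rfl
  | bot => rfl
  | neg A ih => simp [MF.peval, tval, ih]
  | and A B ihA ihB => simp [MF.peval, tval, ihA, ihB]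
  | or A B ihA ihB => simp [MF.peval, tval, ihA, ihB]
  | imp A B ihA ihB => simp [MF.peval, tval, ihA, ihB]
  | box A ih => rfl

theorem tval_true {A : MF} (h : END A) : tval A = true := by
  induction h with
  | taut h => rw [← tval_peval]; exact h tval
  | @axD A =>
    show (!(tval A.box && tval A.neg.box)) = true
    simp only [tval]
    cases tval A <;> rfl
  | @mp A B h1 h2 ih1 ih2 =>
    have h' : (!tval A || tval B) = true := ih1
    rw [ih2] at h'; simpa using h'
  | nec h ih => exact ih
  | re h ih => exact ih

theorem END_consistent : ¬ END .bot := fun h => by simpa [tval] using tval_true h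

/-! ### specific tautologies -/

theorem tautIffRefl (A : MF) : MF.Tautology (A.iff A) := by
  intro v; simp only [MF.iff, MF.peval]
  cases MF.peval v A <;> rfl

theorem tautIffSym (A B : MF) : MF.Tautology ((A.iff B).imp (B.iff A)) := by
  intro v; simp only [MF.iff, MF.peval]
  cases MF.peval v A <;> cases MF.peval v B <;> rfl

theorem tautIffTrans (A B C : MF) :
    MF.Tautology ((A.iff B).imp ((B.iff C).imp (A.iff C))) := by
  intro v; simp only [MF.iff, MF.peval]
  cases MF.peval v A <;> cases MF.peval v B <;> cases MF.peval v C <;> rfl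

theorem tautIffMp (A B : MF) : MF.Tautology ((A.iff B).imp (A.imp B)) := by
  intro v; simp only [MF.iff, MF.peval]
  cases MF.peval v A <;> cases MF.peval v B <;> rfl

theorem tautIffNeg (A B : MF) : MF.Tautology ((A.iff B).imp (A.neg.imp B.neg)) := by
  intro v; simp only [MF.iff, MF.peval]
  cases MF.peval v A <;> cases MF.peval v B <;> rfl

theorem tautIffCongrNeg (C C' B : MF) :
    MF.Tautology ((C.iff C').imp ((B.iff C.neg).imp (B.iff C'.neg))) := by
  intro v; simp only [MF.iff, MF.peval]
  cases MF.peval v B <;> cases MF.peval v C <;> cases MF.peval v C' <;> rfl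

theorem tautContra (B C : MF) :
    MF.Tautology ((B.iff C.neg).imp (C.imp (B.imp .bot))) := by
  intro v; simp only [MF.iff, MF.peval]
  cases MF.peval v B <;> cases MF.peval v C <;> rfl

theorem tautDoubleNeg (A : MF) : MF.Tautology (A.iff A.neg.neg) := by
  intro v; simp only [MF.iff, MF.peval]
  cases MF.peval v A <;> rfl

theorem tautAxDTransfer (X Y Z : MF) :
    MF.Tautology ((X.iff Y).imp (((Z.and Y).neg).imp ((X.and Z).neg))) := by
  intro v; simp only [MF.iff, MF.peval]
  cases MF.peval v X <;> cases MF.peval v Y <;> cases MF.peval v Z <;> rfl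

theorem tautNotBox (X Y : MF) :
    MF.Tautology (((X.and Y).neg).imp (Y.imp X.neg)) := by
  intro v; simp only [MF.iff, MF.peval]
  cases MF.peval v X <;> cases MF.peval v Y <;> rfl

/-! ### END equivalence utilities -/

theorem eSym {A B : MF} (h : END (A.iff B)) : END (B.iff A) :=
  END.mp (END.taut (tautIffSym A B)) h

theorem eTrans {A B C : MF} (h1 : END (A.iff B)) (h2 : END (B.iff C)) : END (A.iff C) :=
  END.mp2 (END.taut (tautIffTrans A B C)) h1 h2

theorem eMp {A B : MF} (h : END (A.iff B)) (hA : END A) : END B :=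
  END.mp (END.mp (END.taut (tautIffMp A B)) h) hA

theorem eMpNeg {A B : MF} (h : END (A.iff B)) (hA : END A.neg) : END B.neg :=
  END.mp (END.mp (END.taut (tautIffNeg A B)) h) hA

theorem eRefl (A : MF) : END (A.iff A) := END.taut (tautIffRefl A)

theorem eCongrNeg {C C' B : MF} (h : END (C.iff C')) (h2 : END (B.iff C.neg)) :
    END (B.iff C'.neg) :=
  END.mp2 (END.taut (tautIffCongrNeg C C' B)) h h2

theorem eNotBoth {B C : MF} (hB : END B) (hC : END C) (h : END (B.iff C.neg)) : False :=
  END_consistent (END.mp (END.mp2 (END.taut (tautContra B C)) h hC) hB)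

/-- `⊢ ¬B` implies `⊢ ¬□B` -/
theorem eNegBox {B : MF} (h : END B.neg) : END B.box.neg :=
  END.mp (END.mp (END.taut (tautNotBox B.box B.neg.box)) END.axD) (END.nec h)

/-- `⊢ B ↔ ¬C` implies `⊢ ¬(□B ∧ □C)` -/
theorem eDTransfer {B C : MF} (h : END (B.iff C.neg)) : END ((B.box.and C.box).neg) :=
  END.mp2 (END.taut (tautAxDTransfer B.box C.neg.box C.box)) (END.re h) END.axD

/-! ### admissible valuations -/

/-- the four constraints on a valuation, for a pair of box-arguments -/
def Cond (v : MF → Bool) (B C : MF) : Prop :=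
  (END (B.iff C) → v B.box = v C.box) ∧
  (END B → v B.box = true) ∧
  (END B.neg → v B.box = false) ∧
  (END (B.iff C.neg) → ¬(v B.box = true ∧ v C.box = true))

def Adm (v : MF → Bool) : Prop := ∀ B C, Cond v B C

def AdmOn (S : List MF) (v : MF → Bool) : Prop := ∀ B ∈ S, ∀ C ∈ S, Cond v B C

theorem sound_adm {A : MF} (h : END A) : ∀ v, Adm v → MF.peval v A = true := by
  induction h with
  | taut h => exact fun v _ => h v
  | @axD A =>
    intro v hv
    have h4 := (hv A A.neg).2.2.2 (END.taut (tautDoubleNeg A))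
    show (!(v A.box && v A.neg.box)) = true
    cases hA : v A.box <;> cases hA' : v A.neg.box <;> simp_all
  | @mp A B h1 h2 ih1 ih2 =>
    intro v hv
    have e1 : (!MF.peval v A || MF.peval v B) = true := ih1 v hv
    rw [ih2 v hv] at e1; simpa using e1
  | @nec A h ih =>
    intro v hv
    exact (hv A A).2.1 h
  | @re A B h ih =>
    intro v hv
    have e := (hv A B).1 h
    show ((!v A.box || v B.box) && (!v B.box || v A.box)) = true
    rw [e]; cases v B.box <;> rfl

open Classical in
/-- extension of a valuation satisfying the constraints on `S` to a fully
admissible valuation -/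
noncomputable def extV (S : List MF) (v : MF → Bool) : MF → Bool := fun a =>
  match a with
  | .box B =>
    if h : ∃ C, C ∈ S ∧ END (B.iff C) then v (MF.box h.choose)
    else decide (END B)
  | a => v a

open Classical in
theorem extV_spec (S : List MF) (v : MF → Bool) (B : MF) :
    (∃ C, C ∈ S ∧ END (B.iff C) ∧ extV S v B.box = v C.box) ∨
    ((∀ C ∈ S, ¬END (B.iff C)) ∧ extV S v B.box = decide (END B)) := by
  show _ ∨ (_ ∧
    (if h : ∃ C, C ∈ S ∧ END (B.iff C) then v (MF.box h.choose) else decide (END B)) = _)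
  by_cases h : ∃ C, C ∈ S ∧ END (B.iff C)
  · left
    refine ⟨h.choose, h.choose_spec.1, h.choose_spec.2, ?_⟩
    show (if h' : _ then _ else _) = _
    rw [dif_pos h]
  · right
    exact ⟨fun C hC hE => h ⟨C, hC, hE⟩, dif_neg h⟩

theorem extV_var (S : List MF) (v : MF → Bool) (n : ℕ) : extV S v (.var n) = v (.var n) := rfl

theorem extV_agree {S : List MF} {v : MF → Bool} (hv : AdmOn S v) {B : MF} (hB : B ∈ S) :
    extV S v B.box = v B.box := by
  rcases extV_spec S v B with ⟨C, hC, hE, he⟩ | ⟨h, he⟩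
  · rw [he]
    exact ((hv C hC B hB).1 (eSym hE)).symm ▸ rfl
  · exact absurd (eRefl B) (h B hB)

theorem adm_extV {S : List MF} {v : MF → Bool} (hv : AdmOn S v) : Adm (extV S v) := by
  classical
  intro B C
  refine ⟨?_, ?_, ?_, ?_⟩
  · -- equivalences
    intro hBC
    rcases extV_spec S v B with ⟨B1, hB1, hEB, heB⟩ | ⟨hB0, heB⟩ <;>
      rcases extV_spec S v C with ⟨C1, hC1, hEC, heC⟩ | ⟨hC0, heC⟩
    · rw [heB, heC]
      exact (hv B1 hB1 C1 hC1).1 (eTrans (eSym hEB) (eTrans hBC hEC))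
    · exact absurd (eTrans (eSym hBC) hEB) (hC0 B1 hB1)
    · exact absurd (eTrans hBC hEC) (hB0 C1 hC1)
    · rw [heB, heC]
      by_cases h : END B
      · rw [decide_eq_true h, decide_eq_true (eMp hBC h)]
      · have h' : ¬ END C := fun hc => h (eMp (eSym hBC) hc)
        rw [decide_eq_false h, decide_eq_false h']
  · -- provable
    intro hB
    rcases extV_spec S v B with ⟨B1, hB1, hEB, heB⟩ | ⟨hB0, heB⟩
    · rw [heB]; exact (hv B1 hB1 B1 hB1).2.1 (eMp hEB hB)
    · rw [heB]; exact decide_eq_true hB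
  · -- refutable
    intro hB
    rcases extV_spec S v B with ⟨B1, hB1, hEB, heB⟩ | ⟨hB0, heB⟩
    · rw [heB]; exact (hv B1 hB1 B1 hB1).2.2.1 (eMpNeg hEB hB)
    · rw [heB]
      by_cases h : END B
      · have htt : MF.Tautology (B.imp (B.neg.imp .bot)) := by
          intro w; simp only [MF.peval]; cases MF.peval w B <;> rfl
        exact absurd (END.mp2 (END.taut htt) h hB) END_consistent
      · exact decide_eq_false h
  · -- D condition
    intro hBC hcon
    rcases extV_spec S v B with ⟨B1, hB1, hEB, heB⟩ | ⟨hB0, heB⟩ <;>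
      rcases extV_spec S v C with ⟨C1, hC1, hEC, heC⟩ | ⟨hC0, heC⟩
    · -- both have representatives
      rw [heB, heC] at hcon
      have hE : END (B1.iff C1.neg) := eCongrNeg hEC (eTrans (eSym hEB) hBC)
      exact (hv B1 hB1 C1 hC1).2.2.2 hE hcon
    · -- B has representative, C provable
      rw [heB, heC] at hcon
      have hC : END C := of_decide_eq_true hcon.2
      -- from ⊢ C and ⊢ B ↔ ¬C get ⊢ ¬B, hence ⊢ ¬B1
      have hnB : END B.neg := by
        refine END.mp2 (END.taut ?_) hBC hC
        intro w; simp only [MF.iff, MF.peval]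
        cases MF.peval w B <;> cases MF.peval w C <;> rfl
      have := (hv B1 hB1 B1 hB1).2.2.1 (eMpNeg hEB hnB)
      rw [this] at hcon; simp at hcon
    · -- C has representative, B provable
      rw [heB, heC] at hcon
      have hB : END B := of_decide_eq_true hcon.1
      have hnC : END C.neg := by
        refine END.mp2 (END.taut ?_) hBC hB
        intro w; simp only [MF.iff, MF.peval]
        cases MF.peval w B <;> cases MF.peval w C <;> rfl
      have := (hv C1 hC1 C1 hC1).2.2.1 (eMpNeg hEC hnC)
      rw [this] at hcon; simp at hcon
    · -- both provable: contradiction with consistency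
      rw [heB, heC] at hcon
      have hB : END B := of_decide_eq_true hcon.1
      have hC : END C := of_decide_eq_true hcon.2
      exact eNotBoth hB hC hBC

theorem peval_extV {S : List MF} {v : MF → Bool} (hv : AdmOn S v) {A : MF}
    (hS : ∀ B ∈ boxargs A, B ∈ S) : MF.peval (extV S v) A = MF.peval v A := by
  apply peval_congr
  intro a ha
  rcases atoms_shape ha with ⟨n, rfl⟩ | ⟨B, rfl⟩
  · rfl
  · exact extV_agree hv (hS B (mem_boxargs.2 ha))

/-! ### the finite constraint list Γ -/

/-- Γ, relative to an oracle `o` answering END-provability queries -/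
def Gam (o : MF → Bool) (A : MF) : List MF :=
  ((boxargs A).flatMap fun B =>
    (cond (o B) [B.box] []) ++ (cond (o B.neg) [B.box.neg] [])) ++
  ((boxargs A).flatMap fun B => (boxargs A).flatMap fun C =>
    (cond (o (B.iff C)) [(B.box).iff (C.box)] []) ++
    (cond (o (B.iff C.neg)) [(B.box.and C.box).neg] []))

open Classical in
noncomputable def oEND : MF → Bool := fun B => decide (END B)

theorem flatMap_congr {α β : Type*} {l : List α} {f g : α → List β}
    (h : ∀ x ∈ l, f x = g x) : l.flatMap f = l.flatMap g := by
  induction l with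
  | nil => rfl
  | cons x l ih =>
    simp only [List.flatMap_cons]
    rw [h x (by simp), ih fun y hy => h y (by simp [hy])]

theorem Gam_congr {o o' : MF → Bool} {A : MF}
    (h : ∀ B ∈ boxargs A, ∀ C ∈ boxargs A,
      o B = o' B ∧ o B.neg = o' B.neg ∧ o (B.iff C) = o' (B.iff C) ∧
      o (B.iff C.neg) = o' (B.iff C.neg)) :
    Gam o A = Gam o' A := by
  unfold Gam
  congr 1
  · exact flatMap_congr fun B hB => by
      rw [(h B hB B hB).1, (h B hB B hB).2.1]
  · exact flatMap_congr fun B hB => flatMap_congr fun C hC => by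
      rw [(h B hB C hC).2.2.1, (h B hB C hC).2.2.2]

theorem mem_cond {α : Type*} {a x : α} {b : Bool} :
    a ∈ (cond b [x] ([] : List α)) ↔ b = true ∧ a = x := by
  cases b <;> simp

theorem Gam_END {A γ : MF} (h : γ ∈ Gam oEND A) : END γ := by
  classical
  rcases List.mem_append.1 h with h | h
  · obtain ⟨B, _, hm⟩ := List.mem_flatMap.1 h
    rcases List.mem_append.1 hm with hm | hm <;> rw [mem_cond] at hm
    · obtain ⟨ho, rfl⟩ := hm
      exact END.nec (of_decide_eq_true ho)
    · obtain ⟨ho, rfl⟩ := hm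
      exact eNegBox (of_decide_eq_true ho)
  · obtain ⟨B, _, hm⟩ := List.mem_flatMap.1 h
    obtain ⟨C, _, hm⟩ := List.mem_flatMap.1 hm
    rcases List.mem_append.1 hm with hm | hm <;> rw [mem_cond] at hm
    · obtain ⟨ho, rfl⟩ := hm
      exact END.re (of_decide_eq_true ho)
    · obtain ⟨ho, rfl⟩ := hm
      exact eDTransfer (of_decide_eq_true ho)

theorem Gam_sem {A : MF} {v : MF → Bool}
    (h : ∀ γ ∈ Gam oEND A, MF.peval v γ = true) : AdmOn (boxargs A) v := by
  classical
  intro B hB C hC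
  refine ⟨?_, ?_, ?_, ?_⟩
  · intro hE
    have hm : (B.box).iff (C.box) ∈ Gam oEND A := by
      refine List.mem_append.2 (Or.inr (List.mem_flatMap.2 ⟨B, hB,
        List.mem_flatMap.2 ⟨C, hC, List.mem_append.2 (Or.inl ?_)⟩⟩))
      exact mem_cond.2 ⟨decide_eq_true hE, rfl⟩
    have := h _ hm
    revert this
    show ((!v B.box || v C.box) && (!v C.box || v B.box)) = true → v B.box = v C.box
    cases v B.box <;> cases v C.box <;> simp
  · intro hE
    have hm : B.box ∈ Gam oEND A := by
      refine List.mem_append.2 (Or.inl (List.mem_flatMap.2 ⟨B, hB,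
        List.mem_append.2 (Or.inl ?_)⟩))
      exact mem_cond.2 ⟨decide_eq_true hE, rfl⟩
    exact h _ hm
  · intro hE
    have hm : B.box.neg ∈ Gam oEND A := by
      refine List.mem_append.2 (Or.inl (List.mem_flatMap.2 ⟨B, hB,
        List.mem_append.2 (Or.inr ?_)⟩))
      exact mem_cond.2 ⟨decide_eq_true hE, rfl⟩
    have := h _ hm
    revert this
    show (!v B.box) = true → v B.box = false
    cases v B.box <;> simp
  · intro hE
    have hm : (B.box.and C.box).neg ∈ Gam oEND A := by
      refine List.mem_append.2 (Or.inr (List.mem_flatMap.2 ⟨B, hB,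
        List.mem_flatMap.2 ⟨C, hC, List.mem_append.2 (Or.inr ?_)⟩⟩))
      exact mem_cond.2 ⟨decide_eq_true hE, rfl⟩
    have := h _ hm
    revert this
    show (!(v B.box && v C.box)) = true → ¬(v B.box = true ∧ v C.box = true)
    cases v B.box <;> cases v C.box <;> simp

/-! ### folding Γ into an implication chain -/

theorem peval_foldr {v : MF → Bool} {A : MF} :
    ∀ L : List MF, MF.peval v (L.foldr .imp A) = true ↔
      ((∀ γ ∈ L, MF.peval v γ = true) → MF.peval v A = true) := by
  intro L
  induction L with
  | nil => simp
  | cons γ L ih =>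
    show (!MF.peval v γ || MF.peval v (L.foldr .imp A)) = true ↔ _
    cases hγ : MF.peval v γ <;> simp [hγ, ih]

theorem END_foldr {A : MF} :
    ∀ L : List MF, END (L.foldr .imp A) → (∀ γ ∈ L, END γ) → END A := by
  intro L
  induction L with
  | nil => exact fun h _ => h
  | cons γ L ih =>
    intro h hL
    exact ih (END.mp h (hL γ (by simp))) fun γ' h' => hL γ' (by simp [h'])

/-! ### THE characterization -/

theorem END_iff_taut (A : MF) :
    END A ↔ MF.Tautology ((Gam oEND A).foldr .imp A) := by
  constructor
  · intro hA v
    rw [peval_foldr]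
    intro hγ
    have hadm : AdmOn (boxargs A) v := Gam_sem hγ
    rw [← peval_extV hadm fun B hB => hB]
    exact sound_adm hA _ (adm_extV hadm)
  · intro h
    exact END_foldr _ (END.taut h) fun γ hγ => Gam_END hγ

/-! ### the decision algorithm -/

/-- oracle reading answers off a table of booleans indexed by codes -/
def tOr (t : List Bool) : MF → Bool := fun q => t.getD (encodeMF q) false

def stepA (t : List Bool) (A : MF) : Bool := tautB ((Gam (tOr t) A).foldr .imp A)

def stepc (t : List Bool) (c : ℕ) : Bool := ((decodeMF c).map (stepA t)).getD false

/-- bound on the codes of all provability queries made when deciding a formula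
of code `≤ m` -/
def Gbound (m : ℕ) : ℕ :=
  Nat.pair 3 (Nat.pair (Nat.pair 5 (Nat.pair m (Nat.pair 2 m)))
    (Nat.pair 5 (Nat.pair (Nat.pair 2 m) m))) + 1

def WB (n : ℕ) : ℕ → ℕ
  | 0 => n + 1
  | k+1 => Gbound (WB n k)

def tbl (n : ℕ) : ℕ → List Bool
  | 0 => []
  | k+1 => (List.range (WB n n)).map fun c => stepc (tbl n k) c

def ansB (n : ℕ) : Bool := (tbl n (n+1)).getD n false

/-! ### bounds -/

theorem le_Gbound_core (m : ℕ) : m ≤ Gbound m - 1 :=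
  le_trans (Nat.left_le_pair m (Nat.pair 2 m)) <|
    le_trans (Nat.right_le_pair 5 _) <|
      le_trans (Nat.left_le_pair _ _) (Nat.right_le_pair 3 _)

theorem lt_Gbound (m : ℕ) : m < Gbound m := by
  have := le_Gbound_core m
  unfold Gbound at *
  omega

theorem Gbound_mono {m m' : ℕ} (h : m ≤ m') : Gbound m ≤ Gbound m' := by
  unfold Gbound
  have h2 : Nat.pair 2 m ≤ Nat.pair 2 m' := pair_le_pair le_rfl h
  have := pair_le_pair (le_refl 3) (pair_le_pair
    (pair_le_pair (le_refl 5) (pair_le_pair h h2))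
    (pair_le_pair (le_refl 5) (pair_le_pair h2 h)))
  omega

theorem encode_iff_eq (B C : MF) : encodeMF (B.iff C) =
    Nat.pair 3 (Nat.pair (Nat.pair 5 (Nat.pair (encodeMF B) (encodeMF C)))
      (Nat.pair 5 (Nat.pair (encodeMF C) (encodeMF B)))) := rfl

theorem query_bounds {B C : MF} {m : ℕ} (hB : encodeMF B ≤ m) (hC : encodeMF C ≤ m) :
    encodeMF B < Gbound m ∧ encodeMF B.neg < Gbound m ∧
    encodeMF (B.iff C) < Gbound m ∧ encodeMF (B.iff C.neg) < Gbound m := by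
  have hcore := le_Gbound_core m
  have hGpos : 1 ≤ Gbound m := by unfold Gbound; omega
  have hneg : ∀ {X : MF}, encodeMF X ≤ m → encodeMF X.neg ≤ Nat.pair 2 m :=
    fun hX => pair_le_pair le_rfl hX
  refine ⟨by omega, ?_, ?_, ?_⟩
  · have : encodeMF B.neg ≤ Gbound m - 1 :=
      le_trans (hneg hB) <| le_trans (Nat.right_le_pair m _) <|
        le_trans (Nat.right_le_pair 5 _) <|
          le_trans (Nat.left_le_pair _ _) (Nat.right_le_pair 3 _)
    omega
  · have h1 : Nat.pair (encodeMF B) (encodeMF C) ≤ Nat.pair m (Nat.pair 2 m) :=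
      pair_le_pair hB (le_trans hC (le_of_lt (lt_pair (by norm_num))))
    have h2 : Nat.pair (encodeMF C) (encodeMF B) ≤ Nat.pair (Nat.pair 2 m) m :=
      pair_le_pair (le_trans hC (le_of_lt (lt_pair (by norm_num)))) hB
    have : encodeMF (B.iff C) ≤ Gbound m - 1 := by
      rw [encode_iff_eq]
      exact pair_le_pair le_rfl (pair_le_pair
        (pair_le_pair le_rfl h1) (pair_le_pair le_rfl h2))
    omega
  · have hCn : encodeMF C.neg ≤ Nat.pair 2 m := hneg hC
    have h1 : Nat.pair (encodeMF B) (encodeMF C.neg) ≤ Nat.pair m (Nat.pair 2 m) :=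
      pair_le_pair hB hCn
    have h2 : Nat.pair (encodeMF C.neg) (encodeMF B) ≤ Nat.pair (Nat.pair 2 m) m :=
      pair_le_pair hCn hB
    have : encodeMF (B.iff C.neg) ≤ Gbound m - 1 := by
      rw [encode_iff_eq]
      exact pair_le_pair le_rfl (pair_le_pair
        (pair_le_pair le_rfl h1) (pair_le_pair le_rfl h2))
    omega

theorem WB_mono (n : ℕ) : ∀ {k k' : ℕ}, k ≤ k' → WB n k ≤ WB n k' := by
  intro k k' h
  induction k' with
  | zero => simp_all
  | succ k' ih =>
    rcases Nat.lt_or_ge k (k'+1) with h' | h'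
    · exact le_trans (ih (by omega)) (le_of_lt (lt_Gbound _))
    · have : k = k' + 1 := by omega
      subst this; rfl

theorem lt_WB (n k : ℕ) : n < WB n k :=
  lt_of_lt_of_le (by simp [WB]) (WB_mono n (Nat.zero_le k))

theorem getD_map_range {α : Type*} {f : ℕ → α} {m c : ℕ} (h : c < m) (d : α) :
    (((List.range m).map f).getD c d) = f c := by
  rw [List.getD_eq_getElem?_getD, List.getElem?_map, List.getElem?_range h]
  rfl

theorem bool_eq_decide {b : Bool} {p : Prop} [inst : Decidable p] (h : b = true ↔ p) :
    b = decide p := by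
  by_cases hp : p
  · rw [h.2 hp, decide_eq_true hp]
  · rw [decide_eq_false hp]
    cases hb : b
    · rfl
    · exact absurd (h.1 hb) hp

/-! ### correctness of the algorithm -/

theorem tbl_correct (n : ℕ) : ∀ k, k ≤ n + 1 → ∀ c, c < WB n (n + 1 - k) →
    ∀ A, decodeMF c = some A → mdepth A < k →
    ((tbl n k).getD c false = true ↔ END A) := by
  intro k
  induction k with
  | zero => intro _ c _ A _ h; omega
  | succ k IH =>
    intro hk c hc A hdec hd
    have hkn : k ≤ n := by omega
    have hcW : c < WB n n := lt_of_lt_of_le hc (WB_mono n (by omega))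
    have htbl : (tbl n (k+1)).getD c false = stepc (tbl n k) c := by
      show (((List.range (WB n n)).map _).getD c false) = _
      exact getD_map_range hcW false
    rw [htbl]
    have hstep : stepc (tbl n k) c = stepA (tbl n k) A := by
      unfold stepc; rw [hdec]; rfl
    rw [hstep]
    have hcode : encodeMF A = c := encode_decodeMF c A hdec
    -- oracle agreement
    have hGam : Gam (tOr (tbl n k)) A = Gam oEND A := by
      apply Gam_congr
      intro B hB C hC
      have hdB : mdepth B < k := by
        have := mdepth_boxargs hB; omega
      have hdC : mdepth C < k := by
        have := mdepth_boxargs hC; omega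
      have heB : encodeMF B ≤ c := by
        have := encode_boxargs hB; omega
      have heC : encodeMF C ≤ c := by
        have := encode_boxargs hC; omega
      have hq := query_bounds heB heC
      have hGb : Gbound c ≤ WB n (n + 1 - k) := by
        have h1 : Gbound c ≤ Gbound (WB n (n - k)) := Gbound_mono (by
          have he : n + 1 - (k+1) = n - k := by omega
          rw [he] at hc
          omega)
        have h2 : Gbound (WB n (n - k)) = WB n (n - k + 1) := rfl
        rw [h2] at h1
        exact le_trans h1 (WB_mono n (by omega))
      have oracle : ∀ q : MF, encodeMF q < Gbound c → mdepth q < k →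
          tOr (tbl n k) q = oEND q := by
        intro q hq1 hq2
        classical
        show (tbl n k).getD (encodeMF q) false = _
        have : oEND q = decide (END q) := by
          unfold oEND; congr
        rw [this]
        exact bool_eq_decide (IH (by omega) (encodeMF q) (by omega)
          q (decodeMF_encode q) hq2)
      refine ⟨oracle B (by omega) hdB, ?_, ?_, ?_⟩
      · exact oracle B.neg (by omega) hdB
      · exact oracle (B.iff C) (by omega) (by rw [mdepth_iff]; omega)
      · exact oracle (B.iff C.neg) (by omega) (by
          rw [mdepth_iff]
          show max (mdepth B) (mdepth C) < k
          omega)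
    unfold stepA
    rw [hGam, tautB_iff]
    exact (END_iff_taut A).symm

theorem ansB_correct (n : ℕ) : ansB n = true ↔ ∃ A, encodeMF A = n ∧ END A := by
  unfold ansB
  cases hdec : decodeMF n with
  | none =>
    have h1 : (tbl n (n+1)).getD n false = stepc (tbl n n) n := by
      show (((List.range (WB n n)).map _).getD n false) = _
      exact getD_map_range (lt_WB n n) false
    rw [h1]
    unfold stepc
    rw [hdec]
    simp only [Option.map_none, Option.getD_none]
    constructor
    · intro h; cases h
    · rintro ⟨A, rfl, _⟩
      rw [decodeMF_encode] at hdec; cases hdec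
  | some A =>
    have hA : encodeMF A = n := encode_decodeMF n A hdec
    have hd : mdepth A < n + 1 := by
      have := mdepth_le_encode A; omega
    rw [tbl_correct n (n+1) le_rfl n (by simp [WB]) A hdec hd]
    constructor
    · intro h; exact ⟨A, hA, h⟩
    · rintro ⟨A', hA', h⟩
      have : decodeMF n = some A' := by rw [← hA']; exact decodeMF_encode A'
      rw [hdec] at this; cases this; exact h

/-! ### Primcodable instance -/

def eG (n : ℕ) : ℕ := (decodeMF n).casesOn 0 (fun A => encodeMF A + 1)

theorem eG_none {n : ℕ} (h : decodeMF n = none) : eG n = 0 := by unfold eG; rw [h]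

theorem eG_some {n : ℕ} {A : MF} (h : decodeMF n = some A) : eG n = n + 1 := by
  unfold eG; rw [h]; simp [encode_decodeMF n A h]

theorem eG_eq_zero {n : ℕ} : eG n = 0 ↔ decodeMF n = none := by
  cases h : decodeMF n with
  | none => simp [eG_none h]
  | some A => simp [eG_some h]

private def gG : Unit → List ℕ → Option ℕ := fun _ l =>
  let n := l.length
  let t := n.unpair.1
  let r := n.unpair.2
  some (
    if t = 0 then n + 1
    else if t = 1 then (if r = 0 then n + 1 else 0)
    else if t = 2 then (if l.getD r 0 = 0 then 0 else n + 1)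
    else if t ≤ 5 then
      (if l.getD r.unpair.1 0 = 0 ∨ l.getD r.unpair.2 0 = 0 then 0 else n + 1)
    else if t = 6 then (if l.getD r 0 = 0 then 0 else n + 1)
    else 0)

private theorem hgG : Primrec₂ gG := by
  unfold gG
  have hlen : Primrec fun (p : Unit × List ℕ) => p.2.length := Primrec.list_length.comp .snd
  have hup1 : Primrec fun (p : Unit × List ℕ) => p.2.length.unpair.1 :=
    Primrec.fst.comp (Primrec.unpair.comp hlen)
  have hup2 : Primrec fun (p : Unit × List ℕ) => p.2.length.unpair.2 :=
    Primrec.snd.comp (Primrec.unpair.comp hlen)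
  have hgetD : ∀ {f : Unit × List ℕ → ℕ}, Primrec f →
      Primrec fun p : Unit × List ℕ => p.2.getD (f p) 0 := fun hf =>
    (Primrec.list_getD 0).comp .snd hf
  have hsucc : Primrec fun (p : Unit × List ℕ) => p.2.length + 1 :=
    Primrec.succ.comp hlen
  apply Primrec.option_some.comp
  apply Primrec.ite (Primrec.eq.comp hup1 (.const 0)) hsucc
  apply Primrec.ite (Primrec.eq.comp hup1 (.const 1))
    (Primrec.ite (Primrec.eq.comp hup2 (.const 0)) hsucc (.const 0))
  apply Primrec.ite (Primrec.eq.comp hup1 (.const 2))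
    (Primrec.ite (Primrec.eq.comp (hgetD hup2) (.const 0)) (.const 0) hsucc)
  apply Primrec.ite (Primrec.nat_le.comp hup1 (.const 5))
    (Primrec.ite
      ((PrimrecPred.or
        (Primrec.eq.comp (hgetD (Primrec.fst.comp (Primrec.unpair.comp hup2))) (.const 0))
        (Primrec.eq.comp (hgetD (Primrec.snd.comp (Primrec.unpair.comp hup2))) (.const 0))))
      (.const 0) hsucc)
  apply Primrec.ite (Primrec.eq.comp hup1 (.const 6))
    (Primrec.ite (Primrec.eq.comp (hgetD hup2) (.const 0)) (.const 0) hsucc)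
  exact .const 0

private theorem HgG : ∀ (u : Unit) (n : ℕ),
    gG u ((List.range n).map eG) = some (eG n) := by
  intro u n
  have hlen : ((List.range n).map eG).length = n := by simp
  have hget : ∀ c, c < n → ((List.range n).map eG).getD c 0 = eG c :=
    fun c hc => getD_map_range hc 0
  unfold gG
  simp only [hlen]
  congr 1
  have hdec := decodeMF_eq n
  by_cases h0 : n.unpair.1 = 0
  · rw [if_pos h0]
    simp only [h0, if_pos rfl] at hdec
    rw [eG_some hdec]
  · rw [if_neg h0]
    have h1pos : 1 ≤ n.unpair.1 := by omega
    have h2 : n.unpair.2 < n := unpair_snd_lt h1pos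
    have h31 : n.unpair.2.unpair.1 < n := by
      have := Nat.unpair_left_le n.unpair.2; omega
    have h32 : n.unpair.2.unpair.2 < n := by
      have := Nat.unpair_right_le n.unpair.2; omega
    by_cases ht1 : n.unpair.1 = 1
    · rw [if_pos ht1]
      simp only [h0, ht1, reduceIte] at hdec
      by_cases hr : n.unpair.2 = 0
      · rw [if_pos hr]
        rw [if_pos hr] at hdec
        rw [eG_some hdec]
      · rw [if_neg hr]
        rw [if_neg hr] at hdec
        rw [eG_none hdec]
    · rw [if_neg ht1]
      by_cases ht2 : n.unpair.1 = 2
      · rw [if_pos ht2]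
        simp only [h0, ht1, ht2, reduceIte] at hdec
        rw [hget _ h2]
        cases hr : decodeMF n.unpair.2 with
        | none =>
          rw [if_pos (eG_eq_zero.2 hr)]
          rw [hr] at hdec
          rw [eG_none (by simpa using hdec)]
        | some B =>
          rw [if_neg (by rw [eG_some hr]; omega)]
          rw [hr] at hdec
          rw [eG_some hdec]
      · rw [if_neg ht2]
        by_cases ht5 : n.unpair.1 ≤ 5
        · rw [if_pos ht5]
          rw [hget _ h31, hget _ h32]
          have hbin : decodeMF n =
              (decodeMF n.unpair.2.unpair.1).bind fun A =>
                (decodeMF n.unpair.2.unpair.2).map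
                  (if n.unpair.1 = 3 then A.and else if n.unpair.1 = 4 then A.or else A.imp) := by
            by_cases ht3 : n.unpair.1 = 3
            · simp only [h0, ht1, ht2, ht3, reduceIte] at hdec ⊢; exact hdec
            · by_cases ht4 : n.unpair.1 = 4
              · simp only [h0, ht1, ht2, ht3, ht4, reduceIte] at hdec ⊢; exact hdec
              · have ht5' : n.unpair.1 = 5 := by omega
                simp only [h0, ht1, ht2, ht3, ht4, ht5', reduceIte] at hdec ⊢; exact hdec
          cases hrA : decodeMF n.unpair.2.unpair.1 with
          | none =>
            rw [if_pos (Or.inl (eG_eq_zero.2 hrA))]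
            rw [hrA] at hbin
            rw [eG_none (by simpa using hbin)]
          | some B =>
            cases hrB : decodeMF n.unpair.2.unpair.2 with
            | none =>
              rw [if_pos (Or.inr (eG_eq_zero.2 hrB))]
              rw [hrA, hrB] at hbin
              rw [eG_none (by simpa using hbin)]
            | some C =>
              rw [if_neg (by rw [eG_some hrA, eG_some hrB]; omega)]
              rw [hrA, hrB] at hbin
              simp only [Option.bind_some, Option.map_some] at hbin
              rw [eG_some hbin]
        · rw [if_neg ht5]
          by_cases ht6 : n.unpair.1 = 6
          · rw [if_pos ht6]
            simp only [h0, ht1, ht2, show n.unpair.1 ≠ 3 by omega,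
              show n.unpair.1 ≠ 4 by omega, show n.unpair.1 ≠ 5 by omega, ht6,
              reduceIte] at hdec
            rw [hget _ h2]
            cases hr : decodeMF n.unpair.2 with
            | none =>
              rw [if_pos (eG_eq_zero.2 hr)]
              rw [hr] at hdec
              rw [eG_none (by simpa using hdec)]
            | some B =>
              rw [if_neg (by rw [eG_some hr]; omega)]
              rw [hr] at hdec
              rw [eG_some hdec]
          · rw [if_neg ht6]
            simp only [h0, ht1, ht2, show n.unpair.1 ≠ 3 by omega,
              show n.unpair.1 ≠ 4 by omega, show n.unpair.1 ≠ 5 by omega, ht6,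
              reduceIte] at hdec
            rw [eG_none hdec]

theorem primrec_eG : Primrec eG :=
  (Primrec.nat_strong_rec (fun _ : Unit => eG) hgG HgG).comp (.const ()) .id

instance : Encodable MF := ⟨encodeMF, decodeMF, decodeMF_encode⟩

instance : Primcodable MF :=
  ⟨(Primrec.nat_iff.1 primrec_eG).of_eq fun n => by
    cases h : decodeMF n with
    | none => simp [eG_none h, Encodable.decode, h, Encodable.encode]
    | some A => simp [eG_some h, Encodable.decode, h, Encodable.encode,
        encode_decodeMF n A h]⟩

theorem primrec_decodeMF : Primrec decodeMF := Primrec.decode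

theorem primrec_encodeMF : Primrec encodeMF := Primrec.encode

/-! ### Primrec of atomsL -/

private def gA : Unit → List (Option (List MF)) → Option (Option (List MF)) := fun _ l =>
  let n := l.length
  let t := n.unpair.1
  let r := n.unpair.2
  some (
    if t = 0 then some [MF.var r]
    else if t = 1 then (if r = 0 then some [] else none)
    else if t = 2 then l.getD r none
    else if t ≤ 5 then
      ((l.getD r.unpair.1 none).bind fun x => (l.getD r.unpair.2 none).map (x ++ ·))
    else if t = 6 then (decodeMF n).map fun A => [A]
    else none)

private theorem hgA : Primrec₂ gA := by
  unfold gA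
  have hlen : Primrec fun (p : Unit × List (Option (List MF))) => p.2.length :=
    Primrec.list_length.comp .snd
  have hup1 : Primrec fun (p : Unit × List (Option (List MF))) => p.2.length.unpair.1 :=
    Primrec.fst.comp (Primrec.unpair.comp hlen)
  have hup2 : Primrec fun (p : Unit × List (Option (List MF))) => p.2.length.unpair.2 :=
    Primrec.snd.comp (Primrec.unpair.comp hlen)
  have hgetD : ∀ {f : Unit × List (Option (List MF)) → ℕ}, Primrec f →
      Primrec fun p : Unit × List (Option (List MF)) => p.2.getD (f p) none := fun hf =>
    (Primrec.list_getD none).comp .snd hf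
  apply Primrec.option_some.comp
  apply Primrec.ite (Primrec.eq.comp hup1 (.const 0))
    (Primrec.option_some.comp
      ((Primrec.list_cons.comp
        (Primrec.encode_iff.1 ((Primrec₂.natPair.comp (.const 0) hup2).of_eq fun p => rfl))
        (.const []))))
  apply Primrec.ite (Primrec.eq.comp hup1 (.const 1))
    (Primrec.ite (Primrec.eq.comp hup2 (.const 0)) (.const (some [])) (.const none))
  apply Primrec.ite (Primrec.eq.comp hup1 (.const 2)) (hgetD hup2)
  apply Primrec.ite (Primrec.nat_le.comp hup1 (.const 5))
    (Primrec.option_bind (hgetD (Primrec.fst.comp (Primrec.unpair.comp hup2)))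
      (Primrec.option_map ((hgetD (Primrec.snd.comp (Primrec.unpair.comp hup2))).comp .fst)
        (Primrec.list_append.comp (Primrec.snd.comp .fst) .snd).to₂).to₂)
  apply Primrec.ite (Primrec.eq.comp hup1 (.const 6))
    (Primrec.option_map (primrec_decodeMF.comp hlen)
      (Primrec.list_cons.comp .snd (.const [])).to₂)
  exact .const none

private theorem HgA : ∀ (u : Unit) (n : ℕ),
    gA u ((List.range n).map fun m => (decodeMF m).map atomsL) =
      some ((decodeMF n).map atomsL) := by
  intro u n
  have hlen : ((List.range n).map fun m => (decodeMF m).map atomsL).length = n := by simp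
  have hget : ∀ c, c < n → ((List.range n).map fun m => (decodeMF m).map atomsL).getD c none
      = (decodeMF c).map atomsL := fun c hc => getD_map_range hc none
  unfold gA
  simp only [hlen]
  congr 1
  have hdec := decodeMF_eq n
  by_cases h0 : n.unpair.1 = 0
  · rw [if_pos h0]
    simp only [h0, if_pos rfl] at hdec
    rw [hdec]; rfl
  · rw [if_neg h0]
    have h1pos : 1 ≤ n.unpair.1 := by omega
    have h2 : n.unpair.2 < n := unpair_snd_lt h1pos
    have h31 : n.unpair.2.unpair.1 < n := by
      have := Nat.unpair_left_le n.unpair.2; omega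
    have h32 : n.unpair.2.unpair.2 < n := by
      have := Nat.unpair_right_le n.unpair.2; omega
    by_cases ht1 : n.unpair.1 = 1
    · rw [if_pos ht1]
      simp only [h0, ht1, reduceIte] at hdec
      by_cases hr : n.unpair.2 = 0
      · rw [if_pos hr]; rw [if_pos hr] at hdec; rw [hdec]; rfl
      · rw [if_neg hr]; rw [if_neg hr] at hdec; rw [hdec]; rfl
    · rw [if_neg ht1]
      by_cases ht2 : n.unpair.1 = 2
      · rw [if_pos ht2]
        simp only [h0, ht1, ht2, reduceIte] at hdec
        rw [hget _ h2, hdec]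
        cases hr : decodeMF n.unpair.2 <;> rfl
      · rw [if_neg ht2]
        by_cases ht5 : n.unpair.1 ≤ 5
        · rw [if_pos ht5]
          rw [hget _ h31, hget _ h32]
          have hbin : decodeMF n =
              (decodeMF n.unpair.2.unpair.1).bind fun A =>
                (decodeMF n.unpair.2.unpair.2).map
                  (if n.unpair.1 = 3 then A.and else if n.unpair.1 = 4 then A.or
                    else A.imp) := by
            by_cases ht3 : n.unpair.1 = 3
            · simp only [h0, ht1, ht2, ht3, reduceIte] at hdec ⊢; exact hdec
            · by_cases ht4 : n.unpair.1 = 4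
              · simp only [h0, ht1, ht2, ht3, ht4, reduceIte] at hdec ⊢; exact hdec
              · have ht5' : n.unpair.1 = 5 := by omega
                simp only [h0, ht1, ht2, ht3, ht4, ht5', reduceIte] at hdec ⊢; exact hdec
          rw [hbin]
          cases hrA : decodeMF n.unpair.2.unpair.1 with
          | none => rfl
          | some B =>
            cases hrB : decodeMF n.unpair.2.unpair.2 with
            | none => rfl
            | some C =>
              simp only [Option.bind_some, Option.map_some]
              by_cases ht3 : n.unpair.1 = 3
              · simp [ht3, atomsL]
              · by_cases ht4 : n.unpair.1 = 4
                · simp [ht3, ht4, atomsL]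
                · simp [ht3, ht4, atomsL]
        · rw [if_neg ht5]
          by_cases ht6 : n.unpair.1 = 6
          · rw [if_pos ht6]
            simp only [h0, ht1, ht2, show n.unpair.1 ≠ 3 by omega,
              show n.unpair.1 ≠ 4 by omega, show n.unpair.1 ≠ 5 by omega, ht6,
              reduceIte] at hdec
            rw [hdec]
            cases hr : decodeMF n.unpair.2 with
            | none => rfl
            | some B => simp [atomsL]
          · rw [if_neg ht6]
            simp only [h0, ht1, ht2, show n.unpair.1 ≠ 3 by omega,
              show n.unpair.1 ≠ 4 by omega, show n.unpair.1 ≠ 5 by omega, ht6,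
              reduceIte] at hdec
            rw [hdec]; rfl

theorem primrec_atomsLO : Primrec fun n => (decodeMF n).map atomsL :=
  (Primrec.nat_strong_rec (fun _ : Unit => fun n => (decodeMF n).map atomsL) hgA HgA).comp
    (.const ()) .id

theorem primrec_atomsL : Primrec atomsL := by
  apply Primrec.option_some_iff.1
  exact (primrec_atomsLO.comp primrec_encodeMF).of_eq fun A => by
    simp [decodeMF_encode]

/-! ### Primrec of pevalT -/

theorem primrec_testBit : Primrec₂ Nat.testBit := by
  have hpow : Primrec₂ (· ^ · : ℕ → ℕ → ℕ) := Primrec₂.unpaired'.1 Nat.Primrec.pow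
  have h : Primrec₂ fun (k i : ℕ) => decide (k / 2 ^ i % 2 = 1) :=
    PrimrecPred.decide (Primrec.eq.comp
      (Primrec.nat_mod.comp
        (Primrec.nat_div.comp .fst (hpow.comp (.const 2) .snd)) (.const 2))
      (.const 1))
  exact h.of_eq fun k i => (Nat.testBit_eq_decide_div_mod_eq).symm

private def gP : (List MF × ℕ) → List (Option Bool) → Option (Option Bool) := fun a l =>
  let n := l.length
  let t := n.unpair.1
  let r := n.unpair.2
  some (
    if t = 0 ∨ t = 6 then (decodeMF n).map fun A => a.2.testBit (a.1.idxOf A)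
    else if t = 1 then (if r = 0 then some false else none)
    else if t = 2 then (l.getD r none).map (! ·)
    else if t = 3 then
      (l.getD r.unpair.1 none).bind fun x => (l.getD r.unpair.2 none).map fun y => x && y
    else if t = 4 then
      (l.getD r.unpair.1 none).bind fun x => (l.getD r.unpair.2 none).map fun y => x || y
    else if t = 5 then
      (l.getD r.unpair.1 none).bind fun x => (l.getD r.unpair.2 none).map fun y => !x || y
    else none)

set_option maxHeartbeats 2000000 in
private theorem hgP : Primrec₂ gP := by
  unfold gP
  have hlen : Primrec fun (p : (List MF × ℕ) × List (Option Bool)) => p.2.length :=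
    Primrec.list_length.comp .snd
  have hup1 : Primrec fun (p : (List MF × ℕ) × List (Option Bool)) => p.2.length.unpair.1 :=
    Primrec.fst.comp (Primrec.unpair.comp hlen)
  have hup2 : Primrec fun (p : (List MF × ℕ) × List (Option Bool)) => p.2.length.unpair.2 :=
    Primrec.snd.comp (Primrec.unpair.comp hlen)
  have hgetD : ∀ {f : (List MF × ℕ) × List (Option Bool) → ℕ}, Primrec f →
      Primrec fun p : (List MF × ℕ) × List (Option Bool) => p.2.getD (f p) none := fun hf =>
    (Primrec.list_getD none).comp .snd hf
  have hbinop : ∀ (op : Bool → Bool → Bool),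
      Primrec fun p : (List MF × ℕ) × List (Option Bool) =>
        (p.2.getD p.2.length.unpair.2.unpair.1 none).bind fun x =>
          (p.2.getD p.2.length.unpair.2.unpair.2 none).map fun y => op x y := by
    intro op
    exact Primrec.option_bind (hgetD (Primrec.fst.comp (Primrec.unpair.comp hup2)))
      (Primrec.option_map ((hgetD (Primrec.snd.comp (Primrec.unpair.comp hup2))).comp .fst)
        ((Primrec.dom_bool₂ op).comp (Primrec.snd.comp .fst) .snd).to₂).to₂
  apply Primrec.option_some.comp
  apply Primrec.ite
    (PrimrecPred.or (Primrec.eq.comp hup1 (.const 0)) (Primrec.eq.comp hup1 (.const 6)))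
    (Primrec.option_map (primrec_decodeMF.comp hlen)
      (primrec_testBit.comp (Primrec.snd.comp (Primrec.fst.comp .fst))
        (Primrec.list_idxOf.comp .snd (Primrec.fst.comp (Primrec.fst.comp .fst)))).to₂)
  apply Primrec.ite (Primrec.eq.comp hup1 (.const 1))
    (Primrec.ite (Primrec.eq.comp hup2 (.const 0)) (.const (some false)) (.const none))
  apply Primrec.ite (Primrec.eq.comp hup1 (.const 2))
    (Primrec.option_map (hgetD hup2) ((Primrec.dom_bool (! ·)).comp .snd).to₂)
  apply Primrec.ite (Primrec.eq.comp hup1 (.const 3)) (hbinop (· && ·))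
  apply Primrec.ite (Primrec.eq.comp hup1 (.const 4)) (hbinop (· || ·))
  apply Primrec.ite (Primrec.eq.comp hup1 (.const 5)) (hbinop fun x y => !x || y)
  exact .const none

private theorem HgP : ∀ (a : List MF × ℕ) (n : ℕ),
    gP a ((List.range n).map fun m => (decodeMF m).map (pevalT a.1 a.2)) =
      some ((decodeMF n).map (pevalT a.1 a.2)) := by
  intro a n
  have hlen : ((List.range n).map fun m => (decodeMF m).map (pevalT a.1 a.2)).length = n := by
    simp
  have hget : ∀ c, c < n →
      ((List.range n).map fun m => (decodeMF m).map (pevalT a.1 a.2)).getD c none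
      = (decodeMF c).map (pevalT a.1 a.2) := fun c hc => getD_map_range hc none
  unfold gP
  simp only [hlen]
  congr 1
  have hdec := decodeMF_eq n
  by_cases h0 : n.unpair.1 = 0
  · rw [if_pos (Or.inl h0)]
    simp only [h0, if_pos rfl] at hdec
    rw [hdec]; rfl
  · have h1pos : 1 ≤ n.unpair.1 := by omega
    have h2 : n.unpair.2 < n := unpair_snd_lt h1pos
    have h31 : n.unpair.2.unpair.1 < n := by
      have := Nat.unpair_left_le n.unpair.2; omega
    have h32 : n.unpair.2.unpair.2 < n := by
      have := Nat.unpair_right_le n.unpair.2; omega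
    by_cases ht6 : n.unpair.1 = 6
    · rw [if_pos (Or.inr ht6)]
      simp only [h0, show n.unpair.1 ≠ 1 by omega, show n.unpair.1 ≠ 2 by omega,
        show n.unpair.1 ≠ 3 by omega, show n.unpair.1 ≠ 4 by omega,
        show n.unpair.1 ≠ 5 by omega, ht6, reduceIte] at hdec
      rw [hdec]
      cases hr : decodeMF n.unpair.2 with
      | none => rfl
      | some B => simp [pevalT]
    · rw [if_neg (by omega : ¬(n.unpair.1 = 0 ∨ n.unpair.1 = 6))]
      by_cases ht1 : n.unpair.1 = 1
      · rw [if_pos ht1]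
        simp only [h0, ht1, reduceIte] at hdec
        by_cases hr : n.unpair.2 = 0
        · rw [if_pos hr]; rw [if_pos hr] at hdec; rw [hdec]; rfl
        · rw [if_neg hr]; rw [if_neg hr] at hdec; rw [hdec]; rfl
      · rw [if_neg ht1]
        by_cases ht2 : n.unpair.1 = 2
        · rw [if_pos ht2]
          simp only [h0, ht1, ht2, reduceIte] at hdec
          rw [hget _ h2, hdec]
          cases hr : decodeMF n.unpair.2 with
          | none => rfl
          | some B => simp [pevalT]
        · rw [if_neg ht2]
          by_cases ht3 : n.unpair.1 = 3
          · rw [if_pos ht3]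
            simp only [h0, ht1, ht2, ht3, reduceIte] at hdec
            rw [hget _ h31, hget _ h32, hdec]
            cases hrA : decodeMF n.unpair.2.unpair.1 with
            | none => rfl
            | some B =>
              cases hrB : decodeMF n.unpair.2.unpair.2 with
              | none => rfl
              | some C => simp [pevalT]
          · rw [if_neg ht3]
            by_cases ht4 : n.unpair.1 = 4
            · rw [if_pos ht4]
              simp only [h0, ht1, ht2, ht3, ht4, reduceIte] at hdec
              rw [hget _ h31, hget _ h32, hdec]
              cases hrA : decodeMF n.unpair.2.unpair.1 with
              | none => rfl
              | some B =>
                cases hrB : decodeMF n.unpair.2.unpair.2 with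
                | none => rfl
                | some C => simp [pevalT]
            · rw [if_neg ht4]
              by_cases ht5 : n.unpair.1 = 5
              · rw [if_pos ht5]
                simp only [h0, ht1, ht2, ht3, ht4, ht5, reduceIte] at hdec
                rw [hget _ h31, hget _ h32, hdec]
                cases hrA : decodeMF n.unpair.2.unpair.1 with
                | none => rfl
                | some B =>
                  cases hrB : decodeMF n.unpair.2.unpair.2 with
                  | none => rfl
                  | some C => simp [pevalT]
              · rw [if_neg ht5]
                simp only [h0, ht1, ht2, ht3, ht4, ht5, ht6, reduceIte] at hdec
                rw [hdec]; rfl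

theorem primrec_pevalT : Primrec₂ fun (a : List MF × ℕ) (A : MF) => pevalT a.1 a.2 A := by
  have h := Primrec.nat_strong_rec
    (fun (a : List MF × ℕ) (n : ℕ) => (decodeMF n).map (pevalT a.1 a.2)) hgP HgP
  apply Primrec₂.option_some_iff.1
  exact (h.comp .fst (primrec_encodeMF.comp .snd)).to₂.of_eq fun a A => by
    simp [decodeMF_encode]

/-! ### Primrec of the remaining ingredients -/

theorem primrec_pow : Primrec₂ (· ^ · : ℕ → ℕ → ℕ) := Primrec₂.unpaired'.1 Nat.Primrec.pow

theorem primrec_tautB : Primrec tautB := by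
  have hf : Primrec fun A : MF => List.range (2 ^ (atomsL A).length) :=
    Primrec.list_range.comp
      (primrec_pow.comp (.const 2) (Primrec.list_length.comp primrec_atomsL))
  have hh : Primrec₂ fun (A : MF) (p : ℕ × Bool) => pevalT (atomsL A) p.1 A && p.2 := by
    have h1 : Primrec fun (x : MF × (ℕ × Bool)) => pevalT (atomsL x.1) x.2.1 x.1 :=
      primrec_pevalT.comp
        ((primrec_atomsL.comp .fst).pair (Primrec.fst.comp .snd)) .fst
    exact ((Primrec.dom_bool₂ (· && ·)).comp h1 (Primrec.snd.comp .snd))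
  exact (Primrec.list_foldr hf (.const true) hh).of_eq fun A => rfl

theorem boxargs_eq (A : MF) : boxargs A = (atomsL A).flatMap fun a =>
    if (encodeMF a).unpair.1 = 6 then (decodeMF ((encodeMF a).unpair.2)).toList else [] := by
  unfold boxargs
  apply flatMap_congr
  intro a _
  cases a <;> simp [encodeMF, Nat.unpair_pair, decodeMF_encode]

theorem primrec_optToList : Primrec fun o : Option MF => o.toList := by
  have := Primrec.option_casesOn (Primrec.id (α := Option MF)) (.const ([] : List MF))
    ((Primrec.list_cons.comp .snd (.const [])).to₂)
  exact this.of_eq fun o => by cases o <;> rfl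

theorem primrec_boxargs : Primrec boxargs := by
  have hinner : Primrec₂ fun (_ : MF) (a : MF) =>
      if (encodeMF a).unpair.1 = 6 then (decodeMF ((encodeMF a).unpair.2)).toList else [] := by
    have he : Primrec fun (p : MF × MF) => (encodeMF p.2).unpair :=
      Primrec.unpair.comp (primrec_encodeMF.comp .snd)
    exact Primrec.ite (Primrec.eq.comp (Primrec.fst.comp he) (.const 6))
      (primrec_optToList.comp (primrec_decodeMF.comp (Primrec.snd.comp he)))
      (.const [])
  exact (Primrec.list_flatMap primrec_atomsL hinner).of_eq fun A => (boxargs_eq A).symm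

theorem primrec_tOr : Primrec₂ tOr :=
  ((Primrec.list_getD false).comp .fst (primrec_encodeMF.comp .snd)).to₂

theorem primrec_box : Primrec MF.box :=
  Primrec.encode_iff.1 ((Primrec₂.natPair.comp (.const 6) primrec_encodeMF).of_eq fun A => rfl)

theorem primrec_neg : Primrec MF.neg :=
  Primrec.encode_iff.1 ((Primrec₂.natPair.comp (.const 2) primrec_encodeMF).of_eq fun A => rfl)

theorem primrec_and : Primrec₂ MF.and :=
  Primrec₂.encode_iff.1
    (((Primrec₂.natPair.comp (Primrec.const 3)
      (Primrec₂.natPair.comp (primrec_encodeMF.comp Primrec.fst)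
        (primrec_encodeMF.comp Primrec.snd)))).of_eq fun p => rfl)

theorem primrec_imp : Primrec₂ MF.imp :=
  Primrec₂.encode_iff.1
    (((Primrec₂.natPair.comp (Primrec.const 5)
      (Primrec₂.natPair.comp (primrec_encodeMF.comp Primrec.fst)
        (primrec_encodeMF.comp Primrec.snd)))).of_eq fun p => rfl)

theorem primrec_iff : Primrec₂ MF.iff :=
  (primrec_and.comp (primrec_imp.comp Primrec.fst Primrec.snd)
    (primrec_imp.comp Primrec.snd Primrec.fst)).to₂

theorem primrec_GamT : Primrec₂ fun (t : List Bool) (A : MF) => Gam (tOr t) A := by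
  have hbox : Primrec fun (p : (List Bool × MF) × MF) => p.2 := Primrec.snd
  -- first part
  have h1 : Primrec fun (p : List Bool × MF) =>
      (boxargs p.2).flatMap fun B =>
        (cond (tOr p.1 B) [B.box] []) ++ (cond (tOr p.1 B.neg) [B.box.neg] []) := by
    apply Primrec.list_flatMap (primrec_boxargs.comp .snd)
    apply Primrec.list_append.comp
    · exact Primrec.cond (primrec_tOr.comp (Primrec.fst.comp .fst) .snd)
        (Primrec.list_cons.comp (primrec_box.comp .snd) (.const []))
        (.const [])
    · exact Primrec.cond
        (primrec_tOr.comp (Primrec.fst.comp .fst) (primrec_neg.comp .snd))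
        (Primrec.list_cons.comp (primrec_neg.comp (primrec_box.comp .snd)) (.const []))
        (.const [])
  -- second part
  have h2 : Primrec fun (p : List Bool × MF) =>
      (boxargs p.2).flatMap fun B => (boxargs p.2).flatMap fun C =>
        (cond (tOr p.1 (B.iff C)) [(B.box).iff (C.box)] []) ++
        (cond (tOr p.1 (B.iff C.neg)) [(B.box.and C.box).neg] []) := by
    apply Primrec.list_flatMap (primrec_boxargs.comp .snd)
    apply Primrec.list_flatMap
      (primrec_boxargs.comp (Primrec.snd.comp (Primrec.fst (β := MF))))
    apply Primrec.list_append.comp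
    · exact Primrec.cond
        (primrec_tOr.comp (Primrec.fst.comp (Primrec.fst.comp .fst))
          (primrec_iff.comp (Primrec.snd.comp .fst) .snd))
        (Primrec.list_cons.comp
          (primrec_iff.comp (primrec_box.comp (Primrec.snd.comp .fst))
            (primrec_box.comp .snd)) (.const []))
        (.const [])
    · exact Primrec.cond
        (primrec_tOr.comp (Primrec.fst.comp (Primrec.fst.comp .fst))
          (primrec_iff.comp (Primrec.snd.comp .fst) (primrec_neg.comp .snd)))
        (Primrec.list_cons.comp
          (primrec_neg.comp (primrec_and.comp
            (primrec_box.comp (Primrec.snd.comp .fst)) (primrec_box.comp .snd)))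
          (.const []))
        (.const [])
  exact ((Primrec.list_append.comp h1 h2)).to₂.of_eq fun t A => rfl

theorem primrec_stepA : Primrec₂ stepA := by
  have hfold : Primrec fun (p : List Bool × MF) =>
      (Gam (tOr p.1) p.2).foldr .imp p.2 :=
    (Primrec.list_foldr (primrec_GamT.comp .fst .snd) .snd
      ((primrec_imp.comp (Primrec.fst.comp .snd) (Primrec.snd.comp .snd)).to₂)).of_eq
      fun p => rfl
  exact ((primrec_tautB.comp hfold)).to₂.of_eq fun t A => rfl

theorem primrec_stepc : Primrec₂ stepc := by
  have h : Primrec fun (p : List Bool × ℕ) =>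
      ((decodeMF p.2).map (stepA p.1)).getD false := by
    apply Primrec.option_getD.comp ?_ (.const false)
    exact Primrec.option_map (primrec_decodeMF.comp .snd)
      ((primrec_stepA.comp (Primrec.fst.comp .fst) .snd).to₂)
  exact h.to₂.of_eq fun t c => rfl

theorem primrec_Gbound : Primrec Gbound := by
  have hp : ∀ {f g : ℕ → ℕ}, Primrec f → Primrec g → Primrec fun m => Nat.pair (f m) (g m) :=
    fun hf hg => Primrec₂.natPair.comp hf hg
  have h2 : Primrec fun m => Nat.pair 2 m := hp (.const 2) .id
  exact Primrec.succ.comp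
    (hp (.const 3) (hp (hp (.const 5) (hp .id h2)) (hp (.const 5) (hp h2 .id))))

theorem primrec_WB : Primrec₂ WB := by
  have := Primrec.nat_rec (f := fun n : ℕ => n + 1)
    (g := fun (_ : ℕ) (p : ℕ × ℕ) => Gbound p.2) Primrec.succ
    ((primrec_Gbound.comp (Primrec.snd.comp .snd)).to₂)
  exact this.of_eq fun n k => by
    induction k with
    | zero => rfl
    | succ k ih => simp [WB, ih]

theorem primrec_tbl : Primrec₂ tbl := by
  have := Primrec.nat_rec (f := fun _ : ℕ => ([] : List Bool))
    (g := fun (n : ℕ) (p : ℕ × List Bool) =>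
      (List.range (WB n n)).map fun c => stepc p.2 c) (.const [])
    ((Primrec.list_map
        (Primrec.list_range.comp (primrec_WB.comp .fst .fst))
        ((primrec_stepc.comp (Primrec.snd.comp (Primrec.snd.comp .fst)) .snd).to₂)).to₂)
  exact this.of_eq fun n k => by
    induction k with
    | zero => rfl
    | succ k ih => simp [tbl, ih]

theorem primrec_ansB : Primrec ansB := by
  have h : Primrec fun n => (tbl n (n+1)).getD n false :=
    Primrec.option_getD.comp
      (Primrec.list_getElem?.comp (primrec_tbl.comp .id Primrec.succ) .id) (.const false)
  exact h.of_eq fun n => rfl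

end ENDdec

/-- Decidability of END: the set of Gödel numbers of END-derivable formulas
is a decidable (computable) predicate. -/
theorem END_decidable :
    ComputablePred (fun n : ℕ => ∃ A : MF, encodeMF A = n ∧ END A) := by
  rw [ComputablePred.computable_iff]
  exact ⟨ENDdec.ansB, ENDdec.primrec_ansB.to_comp,
    funext fun n => propext (ENDdec.ansB_correct n).symm⟩
end

section
/- Decidability of ECNP: the set of modal formulas derivable in the logic ECNP is decidable, i.e., the predicate 'A is derivable in ECNP' on modal formulas is a decidable predicate. -/
/-- The logic ECNP: ECN plus the axiom ¬□⊥. -/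
inductive ECNP : MF → Prop
  | taut {A : MF} : A.Tautology → ECNP A
  | axC {A B : MF} : ECNP ((A.box.and B.box).imp (A.and B).box)
  | axP : ECNP MF.bot.box.neg
  | mp {A B : MF} : ECNP (A.imp B) → ECNP A → ECNP B
  | nec {A : MF} : ECNP A → ECNP A.box
  | re {A B : MF} : ECNP (A.iff B) → ECNP (A.box.iff B.box)

-- Section A : basic definitions and lemmas
deriving instance DecidableEq for MF

namespace MFD

open List

/-- modal depth -/
def mdepth : MF → ℕ
  | .var _ => 0
  | .bot => 0
  | .neg A => mdepth A
  | .and A B => max (mdepth A) (mdepth B)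
  | .or A B => max (mdepth A) (mdepth B)
  | .imp A B => max (mdepth A) (mdepth B)
  | .box A => mdepth A + 1

/-- propositional atoms (vars and maximal boxed subformulas) -/
def atoms : MF → List MF
  | .var n => [.var n]
  | .bot => []
  | .neg A => atoms A
  | .and A B => atoms A ++ atoms B
  | .or A B => atoms A ++ atoms B
  | .imp A B => atoms A ++ atoms B
  | .box A => [A.box]

def top : MF := MF.bot.neg

def conjL : List MF → MF
  | [] => top
  | a :: l => a.and (conjL l)

def boxop : MF → Option MF := fun x => match x with
  | .box C => some C
  | _ => none

@[simp] theorem boxop_box (C : MF) : boxop (MF.box C) = some C := rfl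

theorem boxop_eq_some {x : MF} {C : MF} (h : boxop x = some C) : x = MF.box C := by
  cases x <;> simp [boxop] at h <;> simp [h]

/-- sublists -/
def subl : List α → List (List α)
  | [] => [[]]
  | a :: l => subl l ++ (subl l).map (a :: ·)

/-- dedup-like (keeps last occurrences) -/
def dd [DecidableEq α] : List α → List α
  | [] => []
  | a :: l => if a ∈ dd l then dd l else a :: dd l

@[simp] theorem mem_dd [DecidableEq α] {x : α} {l : List α} : x ∈ dd l ↔ x ∈ l := by
  induction l with
  | nil => simp [dd]
  | cons a l ih =>
    by_cases h : a ∈ dd l <;> simp only [dd, h, if_true, if_false, ih, List.mem_cons]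
    · constructor
      · intro hx; exact .inr hx
      · rintro (rfl | hx)
        · exact ih.1 h
        · exact hx

theorem nodup_dd [DecidableEq α] (l : List α) : (dd l).Nodup := by
  induction l with
  | nil => simp [dd]
  | cons a l ih =>
    by_cases h : a ∈ dd l <;> simp [dd, h, ih]

theorem peval_conjL (v : MF → Bool) (L : List MF) :
    (conjL L).peval v = L.all (fun x => x.peval v) := by
  induction L with
  | nil => rfl
  | cons a l ih => simp [conjL, MF.peval, ih]

@[simp] theorem peval_top (v : MF → Bool) : MF.peval v top = true := rfl

theorem mem_subl {l' l : List α} : l' ∈ subl l ↔ l' <+ l := by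
  induction l generalizing l' with
  | nil =>
    simp only [subl, List.mem_singleton]
    constructor
    · rintro rfl; exact .refl _
    · intro h; exact List.sublist_nil.1 h
  | cons a l ih =>
    simp only [subl, List.mem_append, List.mem_map]
    constructor
    · rintro (h | ⟨t, ht, rfl⟩)
      · exact (ih.1 h).cons a
      · exact (ih.1 ht).cons₂ a
    · intro h
      cases h with
      | cons _ h => exact .inl (ih.2 h)
      | cons_cons _ h => exact .inr ⟨_, ih.2 h, rfl⟩

theorem nil_mem_subl (l : List α) : [] ∈ subl l := mem_subl.2 (List.nil_sublist l)

/-- evaluation agrees if valuations agree on atoms -/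
theorem peval_congr {v w : MF → Bool} : ∀ {A : MF}, (∀ x ∈ atoms A, v x = w x) →
    A.peval v = A.peval w := by
  intro A
  induction A with
  | var n => intro h; exact h _ (by simp [atoms])
  | bot => intro _; rfl
  | neg A ih => intro h; simp only [MF.peval]; rw [ih h]
  | and A B ihA ihB =>
    intro h; simp only [MF.peval]
    rw [ihA fun x hx => h x (by simp [atoms, hx]), ihB fun x hx => h x (by simp [atoms, hx])]
  | or A B ihA ihB =>
    intro h; simp only [MF.peval]
    rw [ihA fun x hx => h x (by simp [atoms, hx]), ihB fun x hx => h x (by simp [atoms, hx])]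
  | imp A B ihA ihB =>
    intro h; simp only [MF.peval]
    rw [ihA fun x hx => h x (by simp [atoms, hx]), ihB fun x hx => h x (by simp [atoms, hx])]
  | box A ih => exact fun h => h _ (by simp [atoms])

theorem mdepth_atoms {A x : MF} (hx : x ∈ atoms A) : mdepth x ≤ mdepth A := by
  induction A with
  | var n => simp [atoms] at hx; simp [hx]
  | bot => simp [atoms] at hx
  | neg A ih => exact ih hx
  | and A B ihA ihB =>
    simp [atoms] at hx
    rcases hx with hx | hx
    · exact le_trans (ihA hx) (le_max_left _ _)
    · exact le_trans (ihB hx) (le_max_right _ _)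
  | or A B ihA ihB =>
    simp [atoms] at hx
    rcases hx with hx | hx
    · exact le_trans (ihA hx) (le_max_left _ _)
    · exact le_trans (ihB hx) (le_max_right _ _)
  | imp A B ihA ihB =>
    simp [atoms] at hx
    rcases hx with hx | hx
    · exact le_trans (ihA hx) (le_max_left _ _)
    · exact le_trans (ihB hx) (le_max_right _ _)
  | box A ih => simp [atoms] at hx; simp [hx]

theorem mdepth_conjL_lt {d : ℕ} (hd : 0 < d) {L : List MF} (h : ∀ x ∈ L, mdepth x < d) :
    mdepth (conjL L) < d := by
  induction L with
  | nil => simpa [conjL, top, mdepth]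
  | cons a l ih =>
    simp only [conjL, mdepth, max_lt_iff]
    exact ⟨h a (by simp), ih fun x hx => h x (by simp [hx])⟩

theorem mdepth_iff (A B : MF) : mdepth (A.iff B) = max (mdepth A) (mdepth B) := by
  simp [MF.iff, mdepth, max_comm]

theorem encodeMF_injective : Function.Injective encodeMF := by
  intro A
  induction A with
  | var n => intro B h; cases B <;> simp [encodeMF, Nat.pair_eq_pair] at h <;> simp [h]
  | bot => intro B h; cases B <;> first | rfl | simp [encodeMF, Nat.pair_eq_pair] at h
  | neg A ih => intro B h; cases B <;> simp [encodeMF, Nat.pair_eq_pair] at h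
                exact congrArg MF.neg (ih h)
  | and A B ihA ihB =>
    intro C h; cases C <;> simp [encodeMF, Nat.pair_eq_pair] at h
    rw [ihA h.1, ihB h.2]
  | or A B ihA ihB =>
    intro C h; cases C <;> simp [encodeMF, Nat.pair_eq_pair] at h
    rw [ihA h.1, ihB h.2]
  | imp A B ihA ihB =>
    intro C h; cases C <;> simp [encodeMF, Nat.pair_eq_pair] at h
    rw [ihA h.1, ihB h.2]
  | box A ih => intro B h; cases B <;> simp [encodeMF, Nat.pair_eq_pair] at h
                exact congrArg MF.box (ih h)

theorem right_lt_pair {k : ℕ} (m : ℕ) (hk : 0 < k) : m < Nat.pair k m :=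
  lt_of_le_of_lt (Nat.right_le_pair 0 m) (Nat.pair_lt_pair_left m hk)

theorem mdepth_le_encode (A : MF) : mdepth A ≤ encodeMF A := by
  induction A with
  | var n => simp [mdepth]
  | bot => simp [mdepth]
  | neg A ih => exact le_trans ih (le_trans (Nat.right_le_pair _ _) (le_of_eq rfl))
  | and A B ihA ihB =>
    simp only [mdepth, encodeMF, max_le_iff]
    constructor
    · exact le_trans ihA (le_trans (Nat.left_le_pair _ _) (Nat.right_le_pair _ _))
    · exact le_trans ihB (le_trans (Nat.right_le_pair _ _) (Nat.right_le_pair _ _))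
  | or A B ihA ihB =>
    simp only [mdepth, encodeMF, max_le_iff]
    constructor
    · exact le_trans ihA (le_trans (Nat.left_le_pair _ _) (Nat.right_le_pair _ _))
    · exact le_trans ihB (le_trans (Nat.right_le_pair _ _) (Nat.right_le_pair _ _))
  | imp A B ihA ihB =>
    simp only [mdepth, encodeMF, max_le_iff]
    constructor
    · exact le_trans ihA (le_trans (Nat.left_le_pair _ _) (Nat.right_le_pair _ _))
    · exact le_trans ihB (le_trans (Nat.right_le_pair _ _) (Nat.right_le_pair _ _))
  | box A ih =>
    simp only [mdepth, encodeMF]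
    exact Nat.succ_le_of_lt (lt_of_le_of_lt ih (right_lt_pair _ (by norm_num)))

end MFD
-- Section B : ECNP derived machinery
namespace MFD

open List

theorem tmp1 {A B : MF} (t : MF.Tautology (A.imp B)) (h : ECNP A) : ECNP B :=
  .mp (.taut t) h

theorem tmp2 {A B C : MF} (t : MF.Tautology (A.imp (B.imp C)))
    (hA : ECNP A) (hB : ECNP B) : ECNP C :=
  .mp (tmp1 t hA) hB

theorem tmp3 {A B C D : MF} (t : MF.Tautology (A.imp (B.imp (C.imp D))))
    (hA : ECNP A) (hB : ECNP B) (hC : ECNP C) : ECNP D :=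
  .mp (tmp2 t hA hB) hC

theorem taut_top : MF.Tautology top := fun _ => rfl

-- a library of propositional tautology schemes
theorem tG1 (A B : MF) : MF.Tautology (A.imp (B.imp A)) := by
  intro v; simp only [MF.peval]
  cases A.peval v <;> cases B.peval v <;> rfl

theorem tG2 (P X Y Z : MF) :
    MF.Tautology ((X.imp Y).imp (((P.and Y).imp Z).imp ((P.and X).imp Z))) := by
  intro v; simp only [MF.peval]
  cases P.peval v <;> cases X.peval v <;> cases Y.peval v <;> cases Z.peval v <;> rfl

theorem tG3 (A : MF) : MF.Tautology (A.neg.imp (A.iff MF.bot)) := by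
  intro v; simp only [MF.peval, MF.iff]
  cases A.peval v <;> rfl

theorem tG4 (A B : MF) : MF.Tautology ((A.iff B).imp (B.neg.imp A.neg)) := by
  intro v; simp only [MF.peval, MF.iff]
  cases A.peval v <;> cases B.peval v <;> rfl

theorem tG5 (A B : MF) : MF.Tautology ((A.imp B).imp (B.neg.imp A.neg)) := by
  intro v; simp only [MF.peval]
  cases A.peval v <;> cases B.peval v <;> rfl

theorem tG6 (A B C : MF) : MF.Tautology ((A.iff B).imp ((C.imp B).imp (C.imp A))) := by
  intro v; simp only [MF.peval, MF.iff]
  cases A.peval v <;> cases B.peval v <;> cases C.peval v <;> rfl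

theorem tG7 (A X B : MF) :
    MF.Tautology (((A.and X).imp B).imp (((A.neg.and X).imp B).imp (X.imp B))) := by
  intro v; simp only [MF.peval]
  cases A.peval v <;> cases X.peval v <;> cases B.peval v <;> rfl

theorem tG8 (C D X Y Z : MF) :
    MF.Tautology ((C.iff X).imp ((D.iff Y).imp (((X.and Y).iff Z).imp ((C.and D).iff Z)))) := by
  intro v; simp only [MF.peval, MF.iff]
  cases C.peval v <;> cases D.peval v <;> cases X.peval v <;> cases Y.peval v <;>
    cases Z.peval v <;> rfl

theorem tG9 (X : MF) : MF.Tautology ((MF.bot.iff X).imp X.neg) := by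
  intro v; simp only [MF.peval, MF.iff]
  cases X.peval v <;> rfl

theorem tG10 (C : MF) : MF.Tautology (C.imp (C.iff top)) := by
  intro v; simp only [MF.peval, MF.iff, top]
  cases C.peval v <;> rfl

theorem tG11 (A B : MF) : MF.Tautology ((A.iff B).imp (B.iff A)) := by
  intro v; simp only [MF.peval, MF.iff]
  cases A.peval v <;> cases B.peval v <;> rfl

theorem tG12 (A B C : MF) : MF.Tautology ((A.iff B).imp ((B.iff C).imp (A.iff C))) := by
  intro v; simp only [MF.peval, MF.iff]
  cases A.peval v <;> cases B.peval v <;> cases C.peval v <;> rfl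

theorem tG13 (C : MF) : MF.Tautology (C.iff (C.and top)) := by
  intro v; simp only [MF.peval, MF.iff, top]
  cases C.peval v <;> rfl

theorem tG14 (D Y A : MF) : MF.Tautology ((D.imp Y).imp (Y.neg.imp (D.imp A))) := by
  intro v; simp only [MF.peval]
  cases D.peval v <;> cases Y.peval v <;> cases A.peval v <;> rfl

theorem tG15 (Z W D A : MF) :
    MF.Tautology ((Z.imp W).imp ((D.imp (Z.and W.neg)).imp (D.imp A))) := by
  intro v; simp only [MF.peval]
  cases Z.peval v <;> cases W.peval v <;> cases D.peval v <;> cases A.peval v <;> rfl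

/-- the box-erasing valuation, used for consistency -/
def veval : MF → Bool
  | .var _ => true
  | .bot => false
  | .neg A => !veval A
  | .and A B => veval A && veval B
  | .or A B => veval A || veval B
  | .imp A B => !veval A || veval B
  | .box A => veval A

theorem peval_veval (A : MF) : A.peval (fun x => veval x) = veval A := by
  induction A with
  | var n => rfl
  | bot => rfl
  | neg A ih => simp only [MF.peval, veval, ih]
  | and A B ihA ihB => simp only [MF.peval, veval, ihA, ihB]
  | or A B ihA ihB => simp only [MF.peval, veval, ihA, ihB]
  | imp A B ihA ihB => simp only [MF.peval, veval, ihA, ihB]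
  | box A ih => rfl

theorem veval_of_ECNP {A : MF} (h : ECNP A) : veval A = true := by
  induction h with
  | taut t => rw [← peval_veval]; exact t _
  | @axC A B =>
    simp only [veval]
    cases veval A <;> cases veval B <;> rfl
  | axP => rfl
  | mp _ _ ih1 ih2 =>
    simp only [veval] at ih1
    rw [ih2] at ih1
    simpa using ih1
  | nec _ ih => exact ih
  | @re A B h ih =>
    simp only [MF.iff, veval] at ih ⊢
    cases hA : veval A <;> cases hB : veval B <;> rw [hA, hB] at ih <;>
      first | rfl | simp at ih

theorem consistent {A : MF} (hv : veval A = false) : ¬ ECNP A := fun h => by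
  rw [veval_of_ECNP h] at hv; cases hv

/-- good valuations -/
def Good (v : MF → Bool) : Prop :=
  (∀ C D : MF, v C.box = true → v D.box = true → v (C.and D).box = true) ∧
  v MF.bot.box = false ∧
  (∀ C : MF, ECNP C → v C.box = true) ∧
  (∀ C D : MF, ECNP (C.iff D) → v C.box = v D.box)

theorem sound {A : MF} (h : ECNP A) : ∀ v : MF → Bool, Good v → A.peval v = true := by
  induction h with
  | taut t => exact fun v _ => t v
  | @axC A B =>
    intro v hv
    simp only [MF.peval]
    cases hA : v A.box <;> cases hB : v B.box <;> simp
    exact hv.1 _ _ hA hB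
  | axP => intro v hv; simp only [MF.peval]; rw [hv.2.1]; rfl
  | mp _ _ ih1 ih2 =>
    intro v hv
    have h1 := ih1 v hv
    have h2 := ih2 v hv
    simp only [MF.peval] at h1
    rw [h2] at h1
    simpa using h1
  | @nec A h ih => intro v hv; exact hv.2.2.1 _ h
  | @re A B h ih =>
    intro v hv
    have := hv.2.2.2 _ _ h
    simp only [MF.iff, MF.peval]
    rw [this]
    cases v B.box <;> rfl

/-- conjunction of boxes implies box of conjunction -/
theorem boxConj : ∀ L : List MF, ECNP ((conjL (L.map MF.box)).imp (conjL L).box) := by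
  intro L
  induction L with
  | nil =>
    have h1 : ECNP (conjL ([] : List MF)).box := .nec (.taut taut_top)
    exact tmp1 (tG1 _ _) h1
  | cons a l ih =>
    exact tmp2 (tG2 a.box (conjL (l.map MF.box)) (conjL l).box (a.and (conjL l)).box) ih .axC

/-- from a refutable conjunction, the conjunction of boxes is refutable -/
theorem negBoxConj {L : List MF} (h : ECNP (conjL L).neg) :
    ECNP (conjL (L.map MF.box)).neg := by
  have h1 : ECNP ((conjL L).iff MF.bot) := tmp1 (tG3 _) h
  have h2 : ECNP ((conjL L).box.iff MF.bot.box) := .re h1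
  have h3 : ECNP (conjL L).box.neg := tmp2 (tG4 _ _) h2 .axP
  exact tmp2 (tG5 _ _) (boxConj L) h3

/-- from provable equivalence with a conjunction, conjunction of boxes implies the box -/
theorem boxIffConj {C : MF} {L : List MF} (h : ECNP (C.iff (conjL L))) :
    ECNP ((conjL (L.map MF.box)).imp C.box) := by
  have h2 : ECNP (C.box.iff (conjL L).box) := .re h
  exact tmp2 (tG6 _ _ _) h2 (boxConj L)

/-- conjunctions with the same members are tautologically equivalent, `and` version -/
theorem taut_conj_and {L₁ L₂ L₃ : List MF} (h : ∀ x, x ∈ L₃ ↔ x ∈ L₁ ∨ x ∈ L₂) :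
    MF.Tautology (((conjL L₁).and (conjL L₂)).iff (conjL L₃)) := by
  intro v
  simp only [MF.iff, MF.peval, peval_conjL]
  have : (L₃.all fun x => x.peval v) =
      ((L₁.all fun x => x.peval v) && (L₂.all fun x => x.peval v)) := by
    rcases hh : (L₁.all fun x => x.peval v) && (L₂.all fun x => x.peval v) with _ | _
    · rcases Bool.and_eq_false_iff.1 hh with h1 | h1 <;>
      · rw [List.all_eq_false] at h1 ⊢
        obtain ⟨x, hx, hxf⟩ := h1
        exact ⟨x, (h x).2 (by first | exact .inl hx | exact .inr hx), hxf⟩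
    · rw [Bool.and_eq_true] at hh
      rw [List.all_eq_true]
      intro x hx
      rcases (h x).1 hx with h' | h'
      · exact (List.all_eq_true.1 hh.1) x h'
      · exact (List.all_eq_true.1 hh.2) x h'
  rw [this]
  cases L₁.all fun x => x.peval v <;> cases L₂.all fun x => x.peval v <;> rfl

/-- literals -/
def lit (f : MF → Bool) (x : MF) : MF := cond (f x) x x.neg

def DD (f : MF → Bool) (ats : List MF) : MF := conjL (ats.map (lit f))

theorem peval_DD {v f : MF → Bool} {ats : List MF} (h : (DD f ats).peval v = true) :
    ∀ x ∈ ats, x.peval v = f x := by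
  intro x hx
  rw [DD, peval_conjL, List.all_eq_true] at h
  have := h (lit f x) (List.mem_map.2 ⟨x, hx, rfl⟩)
  rcases hfx : f x with _ | _ <;> rw [lit, hfx] at this
  · simp only [Bool.cond_false, MF.peval] at this
    simpa using this
  · simpa using this

/-- propositional completeness over a list of atoms -/
theorem pc : ∀ ats : List MF, ats.Nodup → ∀ B : MF,
    (∀ f : MF → Bool, ECNP ((DD f ats).imp B)) → ECNP B := by
  intro ats
  induction ats with
  | nil =>
    intro _ B h
    exact .mp (h fun _ => true) (.taut taut_top)
  | cons a l ih =>
    intro nd B h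
    have ha : a ∉ l := (List.nodup_cons.1 nd).1
    apply ih (List.nodup_cons.1 nd).2 B
    intro f
    have key : ∀ t : Bool, DD (fun x => if x = a then t else f x) (a :: l) =
        (cond t a a.neg).and (DD f l) := by
      intro t
      simp only [DD, List.map, conjL]
      congr 1
      · simp [lit]
      · congr 1
        apply List.map_congr_left
        intro x hx
        have hne : x ≠ a := fun e => ha (e ▸ hx)
        simp [lit, hne]
    have h1 := h (fun x => if x = a then true else f x)
    have h2 := h (fun x => if x = a then false else f x)
    rw [key true, Bool.cond_true] at h1
    rw [key false, Bool.cond_false] at h2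
    exact tmp2 (tG7 a (DD f l) B) h1 h2

end MFD
-- Section C : the decision procedure at formula level, and its correctness
namespace MFD

open List

theorem atoms_shape : ∀ {A x : MF}, x ∈ atoms A →
    (∃ n, x = MF.var n) ∨ (∃ C, x = MF.box C) := by
  intro A
  induction A with
  | var n => intro x hx; simp [atoms] at hx; exact .inl ⟨n, hx⟩
  | bot => intro x hx; simp [atoms] at hx
  | neg A ih => exact ih
  | and A B ihA ihB => intro x hx; rcases List.mem_append.1 hx with h | h
                       exacts [ihA h, ihB h]
  | or A B ihA ihB => intro x hx; rcases List.mem_append.1 hx with h | h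
                      exacts [ihA h, ihB h]
  | imp A B ihA ihB => intro x hx; rcases List.mem_append.1 hx with h | h
                       exacts [ihA h, ihB h]
  | box A ih => intro x hx; simp [atoms] at hx; exact .inr ⟨A, hx⟩

theorem peval_atom {v : MF → Bool} {x : MF}
    (h : (∃ n, x = MF.var n) ∨ (∃ C, x = MF.box C)) : x.peval v = v x := by
  rcases h with ⟨n, rfl⟩ | ⟨C, rfl⟩ <;> rfl

theorem mem_filterMap_boxop {C : MF} {l : List MF} :
    C ∈ l.filterMap boxop ↔ MF.box C ∈ l := by
  rw [List.mem_filterMap]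
  constructor
  · rintro ⟨x, hx, he⟩; rwa [boxop_eq_some he] at hx
  · intro h; exact ⟨_, h, rfl⟩

theorem taut_DD_imp_conj {f : MF → Bool} {ats S' : List MF}
    (h : ∀ y ∈ S', y ∈ ats ∧ f y = true) :
    MF.Tautology ((DD f ats).imp (conjL S')) := by
  intro v
  simp only [MF.peval]
  rcases hD : (DD f ats).peval v with _ | _
  · rfl
  · have : S'.all (fun x => x.peval v) = true := List.all_eq_true.2 fun y hy => by
      rw [peval_DD hD y (h y hy).1]; exact (h y hy).2
    rw [peval_conjL, this]; rfl

theorem taut_DD_imp_conj_neg {f : MF → Bool} {ats S' : List MF} {y₀ : MF}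
    (h : ∀ y ∈ S', y ∈ ats ∧ f y = true) (h0 : y₀ ∈ ats) (hf0 : f y₀ = false) :
    MF.Tautology ((DD f ats).imp ((conjL S').and y₀.neg)) := by
  intro v
  simp only [MF.peval]
  rcases hD : (DD f ats).peval v with _ | _
  · rfl
  · have h1 : S'.all (fun x => x.peval v) = true := List.all_eq_true.2 fun y hy => by
      rw [peval_DD hD y (h y hy).1]; exact (h y hy).2
    have h2 : y₀.peval v = false := by rw [peval_DD hD y₀ h0]; exact hf0
    rw [peval_conjL, h1, h2]; rfl

theorem taut_DD_imp {f : MF → Bool} {ats : List MF} {A : MF}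
    (hsub : ∀ x ∈ atoms A, x ∈ ats) (hx : A.peval (fun x => f x) = true) :
    MF.Tautology ((DD f ats).imp A) := by
  intro v
  simp only [MF.peval]
  rcases hD : (DD f ats).peval v with _ | _
  · rfl
  · have : A.peval v = true := by
      rw [peval_congr (w := fun x => f x) fun x hxx => by
        have h1 := peval_DD hD x (hsub x hxx)
        rw [peval_atom (atoms_shape hxx)] at h1
        exact h1]
      exact hx
    rw [this]; rfl

theorem branch_iff {a b c : Bool} :
    (!a || (!b || c)) = true ↔ (a = true → b = true → c = true) := by
  cases a <;> cases b <;> cases c <;> simp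

/-- the decision procedure with fuel -/
def provM : ℕ → MF → Bool
  | 0, _ => false
  | d+1, A =>
    (subl (dd (atoms A))).all fun sub =>
      !((subl (sub.filterMap boxop)).all fun S' => !provM d (conjL S').neg) ||
      (!(((dd (atoms A)).filterMap boxop).all fun C =>
          decide (C ∈ sub.filterMap boxop) ||
            (subl (sub.filterMap boxop)).all fun S' => !provM d (C.iff (conjL S'))) ||
        A.peval fun x => decide (x ∈ sub))

theorem provM_iff : ∀ d (A : MF), mdepth A < d → (provM d A = true ↔ ECNP A) := by
  intro d
  induction d with
  | zero => intro A h; exact absurd h (Nat.not_lt_zero _)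
  | succ d ih =>
    intro A hA
    have hA' : mdepth A ≤ d := Nat.lt_succ_iff.1 hA
    -- depth of box atoms
    have F0 : ∀ C : MF, MF.box C ∈ atoms A → mdepth C < d := by
      intro C hC
      have := mdepth_atoms hC
      simp only [mdepth] at this
      omega
    -- decidability of the conjunction queries via the induction hypothesis
    have Q1 : ∀ S' : List MF, (∀ x ∈ S', mdepth x < d) →
        (provM d (conjL S').neg = true ↔ ECNP (conjL S').neg) := by
      intro S' hS'
      rcases d with _ | d'
      · have hnil : S' = [] := by
          cases S' with
          | nil => rfl
          | cons a l => exact absurd (hS' a (by simp)) (Nat.not_lt_zero _)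
        subst hnil
        simp only [provM]
        constructor
        · intro h; cases h
        · intro h
          exact absurd h (consistent (by rfl))
      · exact ih _ (by
          simp only [mdepth]
          exact mdepth_conjL_lt (Nat.succ_pos _) hS')
    have Q2 : ∀ (C : MF) (S' : List MF), mdepth C < d → (∀ x ∈ S', mdepth x < d) →
        (provM d (C.iff (conjL S')) = true ↔ ECNP (C.iff (conjL S'))) := by
      intro C S' hC hS'
      apply ih
      rw [mdepth_iff]
      have hd : 0 < d := Nat.pos_of_ne_zero (by omega)
      exact max_lt hC (mdepth_conjL_lt hd hS')
    -- unfold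
    rw [show provM (d+1) A = (subl (dd (atoms A))).all fun sub =>
      !((subl (sub.filterMap boxop)).all fun S' => !provM d (conjL S').neg) ||
      (!(((dd (atoms A)).filterMap boxop).all fun C =>
          decide (C ∈ sub.filterMap boxop) ||
            (subl (sub.filterMap boxop)).all fun S' => !provM d (C.iff (conjL S'))) ||
        A.peval fun x => decide (x ∈ sub)) from rfl]
    rw [List.all_eq_true]
    constructor
    · -- completeness
      intro H
      apply pc (dd (atoms A)) (nodup_dd _) A
      intro f
      set ats := dd (atoms A) with hats
      set sub := ats.filter (fun x => f x) with hsubdef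
      have hsub : sub ∈ subl ats := mem_subl.2 List.filter_sublist
      have hmemsub : ∀ x, x ∈ sub ↔ x ∈ ats ∧ f x = true := by
        intro x; rw [hsubdef, List.mem_filter]
      have hbranch := branch_iff.1 (H sub hsub)
      -- facts about S
      set S := sub.filterMap boxop with hSdef
      have hSmem : ∀ C : MF, C ∈ S ↔ MF.box C ∈ sub := fun C => mem_filterMap_boxop
      have hSdepth : ∀ x ∈ S, mdepth x < d := by
        intro x hx
        exact F0 x (mem_dd.1 ((hmemsub _).1 ((hSmem x).1 hx)).1)
      by_cases hadm1 : ((subl S).all fun S' => !provM d (conjL S').neg) = true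
      · by_cases hadm2 : ((ats.filterMap boxop).all fun C =>
            decide (C ∈ S) || (subl S).all fun S' => !provM d (C.iff (conjL S'))) = true
        · -- main case : A evaluates to true at this assignment
          have hp := hbranch hadm1 hadm2
          have hpf : A.peval (fun x => f x) = true := by
            rw [peval_congr (w := fun x => decide (x ∈ sub)) fun x hxx => by
              have hxa : x ∈ ats := mem_dd.2 hxx
              rcases hfx : f x with _ | _
              · symm; simp only [decide_eq_false_iff_not]
                intro hmem; rw [(hmemsub x).1 hmem |>.2] at hfx; cases hfx
              · symm; simp only [decide_eq_true_iff]
                exact (hmemsub x).2 ⟨hxa, hfx⟩]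
            exact hp
          exact .taut (taut_DD_imp (fun x hxx => mem_dd.2 hxx) hpf)
        · -- some box is equivalent to a conjunction of true boxes, but false
          have h2f : ((ats.filterMap boxop).all fun C =>
              decide (C ∈ S) || (subl S).all fun S' => !provM d (C.iff (conjL S'))) = false := by
            simpa using hadm2
          rw [List.all_eq_false] at h2f
          obtain ⟨C, hCbops, hCbad⟩ := h2f
          have hCbad' : (decide (C ∈ S) ||
              ((subl S).all fun S' => !provM d (C.iff (conjL S')))) = false := by
            simpa using hCbad
          rw [Bool.or_eq_false_iff] at hCbad'
          obtain ⟨hCnS, hCall⟩ := hCbad'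
          have hCS : C ∉ S := by simpa using hCnS
          rw [List.all_eq_false] at hCall
          obtain ⟨S', hS'mem, hS'⟩ := hCall
          have hS'prov : provM d (C.iff (conjL S')) = true := by simpa using hS'
          have hS'S : S' <+ S := mem_subl.1 hS'mem
          have hCdepth : mdepth C < d := F0 C (mem_dd.1 (mem_filterMap_boxop.1 hCbops))
          have hprov : ECNP (C.iff (conjL S')) :=
            (Q2 C S' hCdepth fun x hx => hSdepth x (hS'S.subset hx)).1 hS'prov
          have hbox : ECNP ((conjL (S'.map MF.box)).imp C.box) := boxIffConj hprov
          have hboxmem : ∀ y ∈ S'.map MF.box, y ∈ ats ∧ f y = true := by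
            intro y hy
            obtain ⟨c, hc, rfl⟩ := List.mem_map.1 hy
            have hcsub : MF.box c ∈ sub := (hSmem c).1 (hS'S.subset hc)
            exact ⟨((hmemsub _).1 hcsub).1, ((hmemsub _).1 hcsub).2⟩
          have hCats : MF.box C ∈ ats := mem_filterMap_boxop.1 hCbops
          have hCf : f (MF.box C) = false := by
            rcases hf : f (MF.box C) with _ | _
            · rfl
            · exact absurd ((hSmem C).2 ((hmemsub _).2 ⟨hCats, hf⟩)) hCS
          exact tmp2 (tG15 (conjL (S'.map MF.box)) C.box (DD f ats) A) hbox
            (.taut (taut_DD_imp_conj_neg hboxmem hCats hCf))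
      · -- some conjunction of true boxes is refutable
        have h1f : ((subl S).all fun S' => !provM d (conjL S').neg) = false := by
          simpa using hadm1
        rw [List.all_eq_false] at h1f
        obtain ⟨S', hS'mem, hS'⟩ := h1f
        have hS'prov : provM d (conjL S').neg = true := by simpa using hS'
        have hS'S : S' <+ S := mem_subl.1 hS'mem
        have hprov : ECNP (conjL S').neg :=
          (Q1 S' fun x hx => hSdepth x (hS'S.subset hx)).1 hS'prov
        have hneg : ECNP (conjL (S'.map MF.box)).neg := negBoxConj hprov
        have hboxmem : ∀ y ∈ S'.map MF.box, y ∈ ats ∧ f y = true := by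
          intro y hy
          obtain ⟨c, hc, rfl⟩ := List.mem_map.1 hy
          have hcsub : MF.box c ∈ sub := (hSmem c).1 (hS'S.subset hc)
          exact ⟨((hmemsub _).1 hcsub).1, ((hmemsub _).1 hcsub).2⟩
        exact tmp2 (tG14 (DD f ats) (conjL (S'.map MF.box)) A)
          (.taut (taut_DD_imp_conj hboxmem)) hneg
    · -- soundness
      intro hEC sub hsubmem
      rw [branch_iff]
      intro hadm1 hadm2
      classical
      set ats := dd (atoms A) with hats
      set S := sub.filterMap boxop with hSdef
      have hsubats : sub <+ ats := mem_subl.1 hsubmem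
      have hSmem : ∀ C : MF, C ∈ S ↔ MF.box C ∈ sub := fun C => mem_filterMap_boxop
      have hSdepth : ∀ x ∈ S, mdepth x < d := by
        intro x hx
        exact F0 x (mem_dd.1 (hsubats.subset ((hSmem x).1 hx)))
      -- unprovability facts from admissibility
      have hU1 : ∀ S' : List MF, S' <+ S → ¬ ECNP (conjL S').neg := by
        intro S' hS'
        have := List.all_eq_true.1 hadm1 S' (mem_subl.2 hS')
        have hfalse : provM d (conjL S').neg = false := by simpa using this
        intro hE
        rw [(Q1 S' fun x hx => hSdepth x (hS'.subset hx)).2 hE] at hfalse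
        cases hfalse
      have hU2 : ∀ C : MF, MF.box C ∈ atoms A → C ∉ S →
          ∀ S' : List MF, S' <+ S → ¬ ECNP (C.iff (conjL S')) := by
        intro C hC hCS S' hS'
        have hCbops : C ∈ ats.filterMap boxop := mem_filterMap_boxop.2 (mem_dd.2 hC)
        have := List.all_eq_true.1 hadm2 C hCbops
        rw [Bool.or_eq_true] at this
        rcases this with h | h
        · exact absurd (of_decide_eq_true h) hCS
        · have := List.all_eq_true.1 h S' (mem_subl.2 hS')
          have hfalse : provM d (C.iff (conjL S')) = false := by simpa using this
          intro hE
          rw [(Q2 C S' (F0 C hC) fun x hx => hSdepth x (hS'.subset hx)).2 hE] at hfalse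
          cases hfalse
      -- the good valuation
      set v : MF → Bool := fun x => match x with
        | .box C => decide (∃ S' : List MF, S' <+ S ∧ ECNP (C.iff (conjL S')))
        | x => decide (x ∈ sub) with hv
      have hvbox : ∀ C : MF,
          v (MF.box C) = decide (∃ S' : List MF, S' <+ S ∧ ECNP (C.iff (conjL S'))) :=
        fun C => rfl
      have hGood : Good v := by
        refine ⟨?_, ?_, ?_, ?_⟩
        · intro C D hC hD
          rw [hvbox] at hC hD ⊢
          obtain ⟨S₁, hS₁, e₁⟩ := of_decide_eq_true hC
          obtain ⟨S₂, hS₂, e₂⟩ := of_decide_eq_true hD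
          rw [decide_eq_true_iff]
          refine ⟨S.filter (fun x => decide (x ∈ S₁) || decide (x ∈ S₂)), List.filter_sublist, ?_⟩
          have hmem3 : ∀ x, x ∈ S.filter (fun x => decide (x ∈ S₁) || decide (x ∈ S₂)) ↔
              x ∈ S₁ ∨ x ∈ S₂ := by
            intro x
            rw [List.mem_filter]
            constructor
            · intro ⟨_, h⟩
              simp only [Bool.or_eq_true, decide_eq_true_iff] at h
              exact h
            · intro h
              constructor
              · rcases h with h | h
                exacts [hS₁.subset h, hS₂.subset h]
              · rcases h with h | h <;> simp [h]
          exact tmp3 (tG8 C D (conjL S₁) (conjL S₂) _) e₁ e₂ (.taut (taut_conj_and hmem3))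
        · rw [hvbox, decide_eq_false_iff_not]
          rintro ⟨S', hS', e⟩
          exact hU1 S' hS' (tmp1 (tG9 _) e)
        · intro C hC
          rw [hvbox, decide_eq_true_iff]
          exact ⟨[], List.nil_sublist _, tmp1 (tG10 C) hC⟩
        · intro C D hCD
          rw [hvbox, hvbox]
          rw [decide_eq_decide]
          constructor
          · rintro ⟨S', hS', e⟩
            exact ⟨S', hS', tmp2 (tG12 D C (conjL S')) (tmp1 (tG11 C D) hCD) e⟩
          · rintro ⟨S', hS', e⟩
            exact ⟨S', hS', tmp2 (tG12 C D (conjL S')) hCD e⟩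
      have hval := sound hEC v hGood
      have hagree : ∀ x ∈ atoms A, (fun y => decide (y ∈ sub)) x = v x := by
        intro x hx
        rcases atoms_shape hx with ⟨n, rfl⟩ | ⟨C, rfl⟩
        · rfl
        · show decide (MF.box C ∈ sub) = v (MF.box C)
          rw [hvbox]
          by_cases hmem : MF.box C ∈ sub
          · rw [decide_eq_true hmem]
            symm
            rw [decide_eq_true_iff]
            exact ⟨[C], List.singleton_sublist.2 ((hSmem C).2 hmem), .taut (tG13 C)⟩
          · rw [decide_eq_false hmem]
            symm
            rw [decide_eq_false_iff_not]
            rintro ⟨S', hS', e⟩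
            have hCnotS : C ∉ S := fun h => hmem ((hSmem C).1 h)
            exact hU2 C hx hCnotS S' hS' e
      rw [peval_congr hagree]
      exact hval


end MFD
-- Section D : the code-level algorithm and bridging
namespace MFD

open List

theorem unpair2_lt {n : ℕ} (h : 1 ≤ n.unpair.1) : n.unpair.2 < n := by
  conv_rhs => rw [← Nat.pair_unpair n]
  exact right_lt_pair _ h

def negC (c : ℕ) : ℕ := Nat.pair 2 c
def andC (a b : ℕ) : ℕ := Nat.pair 3 (Nat.pair a b)
def impC (a b : ℕ) : ℕ := Nat.pair 5 (Nat.pair a b)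
def iffC (a b : ℕ) : ℕ := andC (impC a b) (impC b a)
def topC : ℕ := Nat.pair 2 (Nat.pair 1 0)
def conjC (l : List ℕ) : ℕ := l.foldr andC topC
def boC (c : ℕ) : Option ℕ := if c.unpair.1 = 6 then some c.unpair.2 else none

def atomsC (n : ℕ) : List ℕ :=
  if h2 : n.unpair.1 = 2 then atomsC n.unpair.2
  else if h35 : 3 ≤ n.unpair.1 ∧ n.unpair.1 ≤ 5 then
    atomsC n.unpair.2.unpair.1 ++ atomsC n.unpair.2.unpair.2
  else if n.unpair.1 = 0 ∨ n.unpair.1 = 6 then [n]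
  else []
  termination_by n
  decreasing_by
  · exact unpair2_lt (by omega)
  · exact lt_of_le_of_lt (Nat.unpair_left_le _) (unpair2_lt (by omega))
  · exact lt_of_le_of_lt (Nat.unpair_right_le _) (unpair2_lt (by omega))

def pevalC (T : List ℕ) (n : ℕ) : Bool :=
  if n.unpair.1 = 0 ∨ n.unpair.1 = 6 then decide (n ∈ T)
  else if h2 : n.unpair.1 = 2 then !pevalC T n.unpair.2
  else if h3 : n.unpair.1 = 3 then
    pevalC T n.unpair.2.unpair.1 && pevalC T n.unpair.2.unpair.2
  else if h4 : n.unpair.1 = 4 then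
    pevalC T n.unpair.2.unpair.1 || pevalC T n.unpair.2.unpair.2
  else if h5 : n.unpair.1 = 5 then
    !pevalC T n.unpair.2.unpair.1 || pevalC T n.unpair.2.unpair.2
  else false
  termination_by n
  decreasing_by
  all_goals first
  | exact unpair2_lt (by omega)
  | exact lt_of_le_of_lt (Nat.unpair_left_le _) (unpair2_lt (by omega))
  | exact lt_of_le_of_lt (Nat.unpair_right_le _) (unpair2_lt (by omega))

def isCodeC (n : ℕ) : Bool :=
  if n.unpair.1 = 0 then true
  else if n.unpair.1 = 1 then decide (n.unpair.2 = 0)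
  else if n.unpair.1 = 2 ∨ n.unpair.1 = 6 then isCodeC n.unpair.2
  else if n.unpair.1 ≤ 5 then isCodeC n.unpair.2.unpair.1 && isCodeC n.unpair.2.unpair.2
  else false
  termination_by n
  decreasing_by
  all_goals first
  | exact unpair2_lt (by omega)
  | exact lt_of_le_of_lt (Nat.unpair_left_le _) (unpair2_lt (by omega))
  | exact lt_of_le_of_lt (Nat.unpair_right_le _) (unpair2_lt (by omega))

def stepT (φ : ℕ) (T : List Bool) : Bool :=
  (subl (dd (atomsC φ))).all fun sub =>
    !((subl (sub.filterMap boC)).all fun S' => !(T.getD (negC (conjC S')) false)) ||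
    (!(((dd (atomsC φ)).filterMap boC).all fun C =>
        decide (C ∈ sub.filterMap boC) ||
          (subl (sub.filterMap boC)).all fun S' => !(T.getD (iffC C (conjC S')) false)) ||
      pevalC sub φ)

def queryList (φ : ℕ) : List ℕ :=
  (subl ((dd (atomsC φ)).filterMap boC)).flatMap fun S' =>
    negC (conjC S') :: ((dd (atomsC φ)).filterMap boC).map fun C => iffC C (conjC S')

def maxL (l : List ℕ) : ℕ := l.foldr max 0
def betaC (M : ℕ) : ℕ := maxL ((List.range (M + 1)).flatMap queryList)

def bIter (M : ℕ) : ℕ → ℕ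
  | 0 => M
  | k + 1 => betaC (bIter M k)

def tabT (n : ℕ) : ℕ → List Bool
  | 0 => List.replicate (bIter n (n + 1) + 1) false
  | k + 1 => (List.range (bIter n (n - k) + 1)).map fun φ => stepT φ (tabT n k)

def mainF (n : ℕ) : Bool := isCodeC n && (tabT n (n + 1)).getD n false

-- encode computation lemmas
theorem encode_neg (A : MF) : encodeMF A.neg = negC (encodeMF A) := rfl
theorem encode_and (A B : MF) : encodeMF (A.and B) = andC (encodeMF A) (encodeMF B) := rfl
theorem encode_iff (A B : MF) : encodeMF (A.iff B) = iffC (encodeMF A) (encodeMF B) := rfl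
theorem encode_top : encodeMF top = topC := rfl

theorem mem_map_encode {x : MF} {l : List MF} :
    encodeMF x ∈ l.map encodeMF ↔ x ∈ l := by
  constructor
  · intro h
    obtain ⟨y, hy, he⟩ := List.mem_map.1 h
    rwa [← encodeMF_injective he]
  · exact fun h => List.mem_map.2 ⟨x, h, rfl⟩

theorem atomsC_encode : ∀ A : MF, atomsC (encodeMF A) = (atoms A).map encodeMF := by
  intro A
  induction A with
  | var n => rw [atomsC]; simp [encodeMF, Nat.unpair_pair, atoms]
  | bot => rw [atomsC]; simp [encodeMF, Nat.unpair_pair, atoms]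
  | neg A ih => rw [atomsC]; simpa [encodeMF, Nat.unpair_pair, atoms] using ih
  | and A B ihA ihB => rw [atomsC]; simp [encodeMF, Nat.unpair_pair, atoms, ihA, ihB]
  | or A B ihA ihB => rw [atomsC]; simp [encodeMF, Nat.unpair_pair, atoms, ihA, ihB]
  | imp A B ihA ihB => rw [atomsC]; simp [encodeMF, Nat.unpair_pair, atoms, ihA, ihB]
  | box A ih => rw [atomsC]; simp [encodeMF, Nat.unpair_pair, atoms]

theorem pevalC_encode (sub : List MF) : ∀ A : MF,
    pevalC (sub.map encodeMF) (encodeMF A) = A.peval fun x => decide (x ∈ sub) := by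
  intro A
  induction A with
  | var n =>
    rw [pevalC]
    simp only [encodeMF, Nat.unpair_pair, MF.peval]
    rw [if_pos (Or.inl trivial)]
    exact decide_eq_decide.2 (mem_map_encode (x := MF.var n))
  | bot => rw [pevalC]; simp [encodeMF, Nat.unpair_pair, MF.peval]
  | neg A ih => rw [pevalC]; simp [encodeMF, Nat.unpair_pair, MF.peval, ih]
  | and A B ihA ihB => rw [pevalC]; simp [encodeMF, Nat.unpair_pair, MF.peval, ihA, ihB]
  | or A B ihA ihB => rw [pevalC]; simp [encodeMF, Nat.unpair_pair, MF.peval, ihA, ihB]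
  | imp A B ihA ihB => rw [pevalC]; simp [encodeMF, Nat.unpair_pair, MF.peval, ihA, ihB]
  | box A ih =>
    rw [pevalC]
    simp only [encodeMF, Nat.unpair_pair, MF.peval]
    rw [if_pos (Or.inr trivial)]
    exact decide_eq_decide.2 (mem_map_encode (x := A.box))

theorem isCodeC_encode : ∀ A : MF, isCodeC (encodeMF A) = true := by
  intro A
  induction A with
  | var n => rw [isCodeC]; simp [encodeMF, Nat.unpair_pair]
  | bot => rw [isCodeC]; simp [encodeMF, Nat.unpair_pair]
  | neg A ih => rw [isCodeC]; simp [encodeMF, Nat.unpair_pair, ih]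
  | and A B ihA ihB => rw [isCodeC]; simp [encodeMF, Nat.unpair_pair, ihA, ihB]
  | or A B ihA ihB => rw [isCodeC]; simp [encodeMF, Nat.unpair_pair, ihA, ihB]
  | imp A B ihA ihB => rw [isCodeC]; simp [encodeMF, Nat.unpair_pair, ihA, ihB]
  | box A ih => rw [isCodeC]; simp [encodeMF, Nat.unpair_pair, ih]

theorem isCodeC_iff (n : ℕ) : isCodeC n = true ↔ ∃ A : MF, encodeMF A = n := by
  constructor
  · induction n using Nat.strong_induction_on with
    | _ n IH =>
      intro h
      rw [isCodeC] at h
      have hn : n = Nat.pair n.unpair.1 n.unpair.2 := (Nat.pair_unpair n).symm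
      by_cases h0 : n.unpair.1 = 0
      · exact ⟨.var n.unpair.2, by rw [encodeMF, ← h0, ← hn]⟩
      · rw [if_neg h0] at h
        by_cases h1 : n.unpair.1 = 1
        · rw [if_pos h1] at h
          have h2 := of_decide_eq_true h
          exact ⟨.bot, by rw [encodeMF, ← h1, ← h2, ← hn]⟩
        · rw [if_neg h1] at h
          by_cases h26 : n.unpair.1 = 2 ∨ n.unpair.1 = 6
          · rw [if_pos h26] at h
            obtain ⟨A, hA⟩ := IH _ (unpair2_lt (by omega)) h
            rcases h26 with h26 | h26
            · exact ⟨A.neg, by rw [encodeMF, hA, ← h26, ← hn]⟩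
            · exact ⟨A.box, by rw [encodeMF, hA, ← h26, ← hn]⟩
          · rw [if_neg h26] at h
            by_cases h5 : n.unpair.1 ≤ 5
            · rw [if_pos h5] at h
              rw [Bool.and_eq_true] at h
              obtain ⟨A, hA⟩ := IH _ (lt_of_le_of_lt (Nat.unpair_left_le _)
                (unpair2_lt (by omega))) h.1
              obtain ⟨B, hB⟩ := IH _ (lt_of_le_of_lt (Nat.unpair_right_le _)
                (unpair2_lt (by omega))) h.2
              have hm : n.unpair.2 = Nat.pair (encodeMF A) (encodeMF B) := by
                rw [hA, hB, Nat.pair_unpair]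
              have h345 : n.unpair.1 = 3 ∨ n.unpair.1 = 4 ∨ n.unpair.1 = 5 := by omega
              rcases h345 with h' | h' | h'
              · exact ⟨A.and B, by rw [encodeMF, ← hm, ← h', ← hn]⟩
              · exact ⟨A.or B, by rw [encodeMF, ← hm, ← h', ← hn]⟩
              · exact ⟨A.imp B, by rw [encodeMF, ← hm, ← h', ← hn]⟩
            · rw [if_neg h5] at h
              cases h
  · rintro ⟨A, rfl⟩
    exact isCodeC_encode A

theorem dd_map_encode : ∀ l : List MF, dd (l.map encodeMF) = (dd l).map encodeMF := by
  intro l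
  induction l with
  | nil => rfl
  | cons a l ih =>
    simp only [List.map, dd, ih, mem_map_encode]
    by_cases h : a ∈ dd l <;> simp [h]

theorem subl_map {α β : Type*} (f : α → β) :
    ∀ l : List α, subl (l.map f) = (subl l).map (List.map f) := by
  intro l
  induction l with
  | nil => rfl
  | cons a l ih =>
    simp only [List.map, subl, ih, List.map_append, List.map_map, Function.comp_def]

theorem boC_encode (x : MF) : boC (encodeMF x) = (boxop x).map encodeMF := by
  cases x <;> simp [boC, boxop, encodeMF, Nat.unpair_pair]

theorem filterMap_boC_encode (l : List MF) :
    (l.map encodeMF).filterMap boC = (l.filterMap boxop).map encodeMF := by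
  rw [List.filterMap_map]
  have h : (boC ∘ encodeMF) = fun x => (boxop x).map encodeMF := funext boC_encode
  rw [h]
  exact List.map_filterMap.symm

theorem conjC_encode : ∀ l : List MF, conjC (l.map encodeMF) = encodeMF (conjL l) := by
  intro l
  induction l with
  | nil => rfl
  | cons a l ih => simp only [List.map, conjC, List.foldr, conjL, encode_and]
                   rw [← ih]; rfl

end MFD
-- Section E : stepT/tabT correctness
namespace MFD

open List

theorem allc {α : Type*} {l : List α} {p q : α → Bool} (h : ∀ x ∈ l, p x = q x) :
    l.all p = l.all q := by
  induction l with
  | nil => rfl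
  | cons a t ih =>
    simp only [List.all_cons]
    rw [h a (by simp), ih fun x hx => h x (by simp [hx])]

theorem all_map' {α β : Type*} (f : α → β) (l : List α) (p : β → Bool) :
    (l.map f).all p = l.all (p ∘ f) := by
  induction l with
  | nil => rfl
  | cons a t ih => simp [ih]

theorem le_maxL {a : ℕ} {l : List ℕ} (h : a ∈ l) : a ≤ maxL l := by
  induction l with
  | nil => cases h
  | cons b t ih =>
    rcases List.mem_cons.1 h with rfl | h'
    · exact le_max_left _ _ |>.trans (le_of_eq rfl)
    · exact le_trans (ih h') (le_max_right _ _)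

theorem getD_replicate_false (m i : ℕ) : (List.replicate m false).getD i false = false := by
  rcases h : (List.replicate m false)[i]? with _ | b
  · simp [List.getD_eq_getElem?_getD, h]
  · have := List.mem_of_getElem? h
    have hb : b = false := List.eq_of_mem_replicate this
    simp [List.getD_eq_getElem?_getD, h, hb]

theorem getD_map_range {f : ℕ → Bool} {m i : ℕ} (h : i < m) (d : Bool) :
    ((List.range m).map f).getD i d = f i := by
  rw [List.getD_eq_getElem?_getD, List.getElem?_map, List.getElem?_range h]
  rfl

theorem query_mem_neg {A : MF} {S' : List MF}
    (h : S' <+ (dd (atoms A)).filterMap boxop) :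
    encodeMF (conjL S').neg ∈ queryList (encodeMF A) := by
  rw [queryList, atomsC_encode, dd_map_encode, filterMap_boC_encode, subl_map]
  apply List.mem_flatMap.2
  refine ⟨S'.map encodeMF, List.mem_map.2 ⟨S', mem_subl.2 h, rfl⟩, ?_⟩
  rw [conjC_encode, ← encode_neg]
  exact List.mem_cons_self

theorem query_mem_iff {A C : MF} {S' : List MF}
    (hC : C ∈ (dd (atoms A)).filterMap boxop)
    (h : S' <+ (dd (atoms A)).filterMap boxop) :
    encodeMF (C.iff (conjL S')) ∈ queryList (encodeMF A) := by
  rw [queryList, atomsC_encode, dd_map_encode, filterMap_boC_encode, subl_map]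
  apply List.mem_flatMap.2
  refine ⟨S'.map encodeMF, List.mem_map.2 ⟨S', mem_subl.2 h, rfl⟩, ?_⟩
  apply List.mem_cons_of_mem
  apply List.mem_map.2
  refine ⟨encodeMF C, List.mem_map.2 ⟨C, hC, rfl⟩, ?_⟩
  rw [conjC_encode, ← encode_iff]

theorem queryList_le_betaC {q φ M : ℕ} (hq : q ∈ queryList φ) (hφ : φ ≤ M) :
    q ≤ betaC M :=
  le_maxL (List.mem_flatMap.2 ⟨φ, List.mem_range.2 (by omega), hq⟩)

theorem stepT_encode {d : ℕ} {A : MF} {T : List Bool}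
    (hT : ∀ B : MF, encodeMF B ∈ queryList (encodeMF A) →
      T.getD (encodeMF B) false = provM d B) :
    stepT (encodeMF A) T = provM (d + 1) A := by
  rw [stepT]
  rw [show provM (d+1) A = (subl (dd (atoms A))).all fun sub =>
      !((subl (sub.filterMap boxop)).all fun S' => !provM d (conjL S').neg) ||
      (!(((dd (atoms A)).filterMap boxop).all fun C =>
          decide (C ∈ sub.filterMap boxop) ||
            (subl (sub.filterMap boxop)).all fun S' => !provM d (C.iff (conjL S'))) ||
        A.peval fun x => decide (x ∈ sub)) from rfl]
  rw [atomsC_encode, dd_map_encode, subl_map, all_map' _ _ _]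
  apply allc
  intro sub hsub
  have hsubl : sub <+ dd (atoms A) := mem_subl.1 hsub
  have hSsubl : sub.filterMap boxop <+ (dd (atoms A)).filterMap boxop :=
    hsubl.filterMap boxop
  simp only [filterMap_boC_encode, subl_map, all_map', Function.comp_def,
    pevalC_encode]
  have e1 : ((subl (sub.filterMap boxop)).all fun S' =>
        !(T.getD (negC (conjC (S'.map encodeMF))) false)) =
      ((subl (sub.filterMap boxop)).all fun S' => !provM d (conjL S').neg) := by
    apply allc
    intro S' hS'
    have : S' <+ (dd (atoms A)).filterMap boxop := (mem_subl.1 hS').trans hSsubl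
    rw [show negC (conjC (S'.map encodeMF)) = encodeMF (conjL S').neg by
      rw [conjC_encode, encode_neg]]
    rw [hT _ (query_mem_neg this)]
  have e2 : (((dd (atoms A)).filterMap boxop).all fun C =>
        decide (encodeMF C ∈ (sub.filterMap boxop).map encodeMF) ||
          (subl (sub.filterMap boxop)).all fun S' =>
            !(T.getD (iffC (encodeMF C) (conjC (S'.map encodeMF))) false)) =
      (((dd (atoms A)).filterMap boxop).all fun C =>
        decide (C ∈ sub.filterMap boxop) ||
          (subl (sub.filterMap boxop)).all fun S' => !provM d (C.iff (conjL S'))) := by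
    apply allc
    intro C hC
    congr 1
    · exact decide_eq_decide.2 mem_map_encode
    · apply allc
      intro S' hS'
      have : S' <+ (dd (atoms A)).filterMap boxop := (mem_subl.1 hS').trans hSsubl
      rw [show iffC (encodeMF C) (conjC (S'.map encodeMF)) = encodeMF (C.iff (conjL S')) by
        rw [conjC_encode, encode_iff]]
      rw [hT _ (query_mem_iff hC this)]
  rw [e1, e2]

theorem bIter_succ' (M k : ℕ) : bIter M (k + 1) = betaC (bIter M k) := rfl

theorem tabT_correct (n : ℕ) : ∀ k, k ≤ n + 1 → ∀ A : MF,
    encodeMF A ≤ bIter n (n + 1 - k) →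
    (tabT n k).getD (encodeMF A) false = provM k A := by
  intro k
  induction k with
  | zero =>
    intro _ A _
    rw [show tabT n 0 = List.replicate (bIter n (n + 1) + 1) false from rfl]
    rw [getD_replicate_false]
    rfl
  | succ k ih =>
    intro hk A hbound
    have hk' : k ≤ n + 1 := by omega
    have hnk : n + 1 - (k + 1) = n - k := by omega
    rw [show tabT n (k + 1) =
      (List.range (bIter n (n - k) + 1)).map (fun φ => stepT φ (tabT n k)) from rfl]
    rw [hnk] at hbound
    rw [getD_map_range (by omega)]
    apply stepT_encode
    intro B hB
    apply ih hk'
    have h1 : encodeMF B ≤ betaC (bIter n (n - k)) := queryList_le_betaC hB hbound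
    have h2 : n + 1 - k = (n - k) + 1 := by omega
    rw [h2, bIter_succ']
    exact h1

theorem mainF_correct (n : ℕ) :
    mainF n = true ↔ ∃ A : MF, encodeMF A = n ∧ ECNP A := by
  rw [mainF, Bool.and_eq_true]
  rcases hc : isCodeC n with _ | _
  · constructor
    · rintro ⟨h, -⟩; cases h
    · rintro ⟨A, rfl, -⟩
      rw [isCodeC_encode A] at hc
      cases hc
  · obtain ⟨A, rfl⟩ := (isCodeC_iff n).1 hc
    have hbound : encodeMF A ≤ bIter (encodeMF A) ((encodeMF A) + 1 - (encodeMF A + 1)) := by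
      simp [bIter]
    have htab := tabT_correct (encodeMF A) (encodeMF A + 1) (le_refl _) A hbound
    rw [htab]
    have hdec := provM_iff (encodeMF A + 1) A
      (lt_of_le_of_lt (mdepth_le_encode A) (Nat.lt_succ_self _))
    constructor
    · rintro ⟨-, h⟩
      exact ⟨A, rfl, hdec.1 h⟩
    · rintro ⟨B, hBA, hB⟩
      have : B = A := encodeMF_injective hBA
      subst this
      exact ⟨rfl, hdec.2 hB⟩

end MFD
-- Section F : computability
namespace MFD

open Primrec

theorem primrec_mem : PrimrecRel fun (a : ℕ) (l : List ℕ) => a ∈ l := by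
  have h : PrimrecPred fun p : ℕ × List ℕ => p.2.idxOf p.1 < p.2.length :=
    PrimrecRel.comp Primrec.nat_lt (Primrec.list_idxOf.comp fst snd)
      (Primrec.list_length.comp snd)
  have h2 : PrimrecPred fun p : ℕ × List ℕ => p.1 ∈ p.2 :=
    PrimrecPred.of_eq h fun p => List.idxOf_lt_length_iff
  exact h2

theorem primrec_all {α β : Type*} [Primcodable α] [Primcodable β]
    {f : α → List β} {p : α → β → Bool} (hf : Primrec f) (hp : Primrec₂ p) :
    Primrec fun a => (f a).all (p a) := by
  have hstep : Primrec₂ fun (a : α) (bs : β × Bool) => p a bs.1 && bs.2 :=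
    (Primrec.and.comp (hp.comp fst (fst.comp snd)) (snd.comp snd)).to₂
  have h := Primrec.list_foldr hf (const true) hstep
  refine h.of_eq fun a => ?_
  induction f a with
  | nil => rfl
  | cons b t ih => simp [ih]

theorem subl_eq_foldr {α : Type*} (l : List α) :
    subl l = l.foldr (fun a acc => acc ++ acc.map (a :: ·)) [[]] := by
  induction l with
  | nil => rfl
  | cons a t ih => simp [subl, ih]

theorem primrec_subl : Primrec (subl : List ℕ → List (List ℕ)) := by
  have hcons : Primrec₂ fun (q : List ℕ × (ℕ × List (List ℕ))) (x : List ℕ) =>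
      q.2.1 :: x :=
    (Primrec.list_cons.comp ((fst.comp snd).comp fst) snd).to₂
  have hstep : Primrec₂ fun (l : List ℕ) (q : ℕ × List (List ℕ)) =>
      q.2 ++ q.2.map (q.1 :: ·) :=
    (Primrec.list_append.comp (snd.comp snd)
      (Primrec.list_map (snd.comp snd) hcons)).to₂
  exact (Primrec.list_foldr .id (const [[]]) hstep).of_eq fun l => (subl_eq_foldr l).symm

theorem dd_eq_foldr (l : List ℕ) :
    dd l = l.foldr (fun a acc => if a ∈ acc then acc else a :: acc) [] := by
  induction l with
  | nil => rfl
  | cons a t ih => simp only [dd, List.foldr, ih]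

theorem primrec_dd : Primrec (dd : List ℕ → List ℕ) := by
  have hstep : Primrec₂ fun (l : List ℕ) (q : ℕ × List ℕ) =>
      if q.1 ∈ q.2 then q.2 else q.1 :: q.2 :=
    (Primrec.ite (primrec_mem.comp (fst.comp snd) (snd.comp snd))
      (snd.comp snd) (Primrec.list_cons.comp (fst.comp snd) (snd.comp snd))).to₂
  exact (Primrec.list_foldr .id (const []) hstep).of_eq fun l => (dd_eq_foldr l).symm

theorem primrec_negC : Primrec negC := Primrec₂.natPair.comp (const 2) .id

theorem primrec_andC : Primrec₂ andC :=
  (Primrec₂.natPair.comp (const 3) (Primrec₂.natPair.comp fst snd)).to₂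

theorem primrec_impC : Primrec₂ impC :=
  (Primrec₂.natPair.comp (const 5) (Primrec₂.natPair.comp fst snd)).to₂

theorem primrec_iffC : Primrec₂ iffC :=
  (primrec_andC.comp (primrec_impC.comp fst snd) (primrec_impC.comp snd fst)).to₂

theorem primrec_conjC : Primrec conjC := by
  have hstep : Primrec₂ fun (l : List ℕ) (q : ℕ × ℕ) => andC q.1 q.2 :=
    (primrec_andC.comp (fst.comp snd) (snd.comp snd)).to₂
  exact Primrec.list_foldr .id (const topC) hstep

theorem primrec_boC : Primrec boC := by
  have h1 : Primrec fun n : ℕ => n.unpair.1 := fst.comp Primrec.unpair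
  have h2 : Primrec fun n : ℕ => n.unpair.2 := snd.comp Primrec.unpair
  exact (Primrec.ite (PrimrecRel.comp Primrec.eq h1 (const 6))
    (option_some.comp h2) (const Option.none)).of_eq fun n => by rw [boC]

end MFD
-- Section G : primrec for the recursive code functions
namespace MFD

open Primrec

theorem getD_map_range' {σ : Type*} (f : ℕ → σ) {m i : ℕ} (h : i < m) (d : σ) :
    ((List.range m).map f).getD i d = f i := by
  rw [List.getD_eq_getElem?_getD, List.getElem?_map, List.getElem?_range h]
  rfl

private def gAtoms : Unit → List (List ℕ) → Option (List ℕ) := fun _ prev =>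
  some (if prev.length.unpair.1 = 2 then prev.getD prev.length.unpair.2 []
    else if 3 ≤ prev.length.unpair.1 ∧ prev.length.unpair.1 ≤ 5 then
      prev.getD prev.length.unpair.2.unpair.1 [] ++ prev.getD prev.length.unpair.2.unpair.2 []
    else if prev.length.unpair.1 = 0 ∨ prev.length.unpair.1 = 6 then [prev.length]
    else [])

theorem primrec_atomsC : Primrec atomsC := by
  have hn : Primrec fun p : Unit × List (List ℕ) => p.2.length :=
    Primrec.list_length.comp snd
  have hk : Primrec fun p : Unit × List (List ℕ) => p.2.length.unpair.1 :=
    fst.comp (Primrec.unpair.comp hn)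
  have hm : Primrec fun p : Unit × List (List ℕ) => p.2.length.unpair.2 :=
    snd.comp (Primrec.unpair.comp hn)
  have hm1 : Primrec fun p : Unit × List (List ℕ) => p.2.length.unpair.2.unpair.1 :=
    fst.comp (Primrec.unpair.comp hm)
  have hm2 : Primrec fun p : Unit × List (List ℕ) => p.2.length.unpair.2.unpair.2 :=
    snd.comp (Primrec.unpair.comp hm)
  have hg : Primrec₂ gAtoms :=
    (option_some.comp (Primrec.ite (PrimrecRel.comp Primrec.eq hk (const 2))
      ((Primrec.list_getD []).comp snd hm)
      (Primrec.ite ((PrimrecRel.comp Primrec.nat_le (const 3) hk).and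
          (PrimrecRel.comp Primrec.nat_le hk (const 5)))
        (Primrec.list_append.comp ((Primrec.list_getD []).comp snd hm1)
          ((Primrec.list_getD []).comp snd hm2))
        (Primrec.ite ((PrimrecRel.comp Primrec.eq hk (const 0)).or
            (PrimrecRel.comp Primrec.eq hk (const 6)))
          (Primrec.list_cons.comp hn (const []))
          (const []))))).to₂
  have H : ∀ (u : Unit) (n : ℕ),
      gAtoms u ((List.range n).map atomsC) = some (atomsC n) := by
    intro _ n
    simp only [gAtoms, List.length_map, List.length_range]
    congr 1
    by_cases h2 : n.unpair.1 = 2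
    · rw [if_pos h2, atomsC, dif_pos h2, getD_map_range' _ (unpair2_lt (by omega)) _]
    · rw [if_neg h2]
      by_cases h35 : 3 ≤ n.unpair.1 ∧ n.unpair.1 ≤ 5
      · rw [if_pos h35, atomsC, dif_neg h2, dif_pos h35,
          getD_map_range' _ (lt_of_le_of_lt (Nat.unpair_left_le _) (unpair2_lt (by omega))) _,
          getD_map_range' _ (lt_of_le_of_lt (Nat.unpair_right_le _) (unpair2_lt (by omega))) _]
      · rw [if_neg h35]
        by_cases h06 : n.unpair.1 = 0 ∨ n.unpair.1 = 6
        · rw [if_pos h06, atomsC, dif_neg h2, dif_neg h35, if_pos h06]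
        · rw [if_neg h06, atomsC, dif_neg h2, dif_neg h35, if_neg h06]
  exact (Primrec.nat_strong_rec _ hg H).comp (const ()) .id

private def gPeval : List ℕ → List Bool → Option Bool := fun T prev =>
  some (if prev.length.unpair.1 = 0 ∨ prev.length.unpair.1 = 6 then decide (prev.length ∈ T)
    else if prev.length.unpair.1 = 2 then !(prev.getD prev.length.unpair.2 false)
    else if prev.length.unpair.1 = 3 then
      prev.getD prev.length.unpair.2.unpair.1 false && prev.getD prev.length.unpair.2.unpair.2 false
    else if prev.length.unpair.1 = 4 then
      prev.getD prev.length.unpair.2.unpair.1 false || prev.getD prev.length.unpair.2.unpair.2 false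
    else if prev.length.unpair.1 = 5 then
      !(prev.getD prev.length.unpair.2.unpair.1 false) || prev.getD prev.length.unpair.2.unpair.2 false
    else false)

theorem primrec_pevalC : Primrec₂ pevalC := by
  have hn : Primrec fun p : List ℕ × List Bool => p.2.length :=
    Primrec.list_length.comp snd
  have hk : Primrec fun p : List ℕ × List Bool => p.2.length.unpair.1 :=
    fst.comp (Primrec.unpair.comp hn)
  have hm : Primrec fun p : List ℕ × List Bool => p.2.length.unpair.2 :=
    snd.comp (Primrec.unpair.comp hn)
  have hm1 : Primrec fun p : List ℕ × List Bool => p.2.length.unpair.2.unpair.1 :=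
    fst.comp (Primrec.unpair.comp hm)
  have hm2 : Primrec fun p : List ℕ × List Bool => p.2.length.unpair.2.unpair.2 :=
    snd.comp (Primrec.unpair.comp hm)
  have hg : Primrec₂ gPeval :=
    (option_some.comp (Primrec.ite
      ((PrimrecRel.comp Primrec.eq hk (const 0)).or (PrimrecRel.comp Primrec.eq hk (const 6)))
      (primrec_mem.comp hn fst).decide
      (Primrec.ite (PrimrecRel.comp Primrec.eq hk (const 2))
        (Primrec.not.comp ((Primrec.list_getD false).comp snd hm))
        (Primrec.ite (PrimrecRel.comp Primrec.eq hk (const 3))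
          (Primrec.and.comp ((Primrec.list_getD false).comp snd hm1)
            ((Primrec.list_getD false).comp snd hm2))
          (Primrec.ite (PrimrecRel.comp Primrec.eq hk (const 4))
            (Primrec.or.comp ((Primrec.list_getD false).comp snd hm1)
              ((Primrec.list_getD false).comp snd hm2))
            (Primrec.ite (PrimrecRel.comp Primrec.eq hk (const 5))
              (Primrec.or.comp (Primrec.not.comp ((Primrec.list_getD false).comp snd hm1))
                ((Primrec.list_getD false).comp snd hm2))
              (const false))))))).to₂
  have H : ∀ (T : List ℕ) (n : ℕ),
      gPeval T ((List.range n).map (pevalC T)) = some (pevalC T n) := by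
    intro T n
    simp only [gPeval, List.length_map, List.length_range]
    congr 1
    by_cases h06 : n.unpair.1 = 0 ∨ n.unpair.1 = 6
    · rw [if_pos h06, pevalC, if_pos h06]
    · rw [if_neg h06]
      by_cases h2 : n.unpair.1 = 2
      · rw [if_pos h2, pevalC, if_neg h06, dif_pos h2,
          getD_map_range' _ (unpair2_lt (by omega)) _]
      · rw [if_neg h2]
        by_cases h3 : n.unpair.1 = 3
        · rw [if_pos h3, pevalC, if_neg h06, dif_neg h2, dif_pos h3,
            getD_map_range' _ (lt_of_le_of_lt (Nat.unpair_left_le _) (unpair2_lt (by omega))) _,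
            getD_map_range' _ (lt_of_le_of_lt (Nat.unpair_right_le _) (unpair2_lt (by omega))) _]
        · rw [if_neg h3]
          by_cases h4 : n.unpair.1 = 4
          · rw [if_pos h4, pevalC, if_neg h06, dif_neg h2, dif_neg h3, dif_pos h4,
              getD_map_range' _ (lt_of_le_of_lt (Nat.unpair_left_le _) (unpair2_lt (by omega))) _,
              getD_map_range' _ (lt_of_le_of_lt (Nat.unpair_right_le _) (unpair2_lt (by omega))) _]
          · rw [if_neg h4]
            by_cases h5 : n.unpair.1 = 5
            · rw [if_pos h5, pevalC, if_neg h06, dif_neg h2, dif_neg h3, dif_neg h4, dif_pos h5,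
                getD_map_range' _ (lt_of_le_of_lt (Nat.unpair_left_le _) (unpair2_lt (by omega))) _,
                getD_map_range' _ (lt_of_le_of_lt (Nat.unpair_right_le _) (unpair2_lt (by omega))) _]
            · rw [if_neg h5, pevalC, if_neg h06, dif_neg h2, dif_neg h3, dif_neg h4, dif_neg h5]
  exact Primrec.nat_strong_rec _ hg H

private def gIsCode : Unit → List Bool → Option Bool := fun _ prev =>
  some (if prev.length.unpair.1 = 0 then true
    else if prev.length.unpair.1 = 1 then decide (prev.length.unpair.2 = 0)
    else if prev.length.unpair.1 = 2 ∨ prev.length.unpair.1 = 6 then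
      prev.getD prev.length.unpair.2 false
    else if prev.length.unpair.1 ≤ 5 then
      prev.getD prev.length.unpair.2.unpair.1 false && prev.getD prev.length.unpair.2.unpair.2 false
    else false)

theorem primrec_isCodeC : Primrec isCodeC := by
  have hn : Primrec fun p : Unit × List Bool => p.2.length :=
    Primrec.list_length.comp snd
  have hk : Primrec fun p : Unit × List Bool => p.2.length.unpair.1 :=
    fst.comp (Primrec.unpair.comp hn)
  have hm : Primrec fun p : Unit × List Bool => p.2.length.unpair.2 :=
    snd.comp (Primrec.unpair.comp hn)
  have hm1 : Primrec fun p : Unit × List Bool => p.2.length.unpair.2.unpair.1 :=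
    fst.comp (Primrec.unpair.comp hm)
  have hm2 : Primrec fun p : Unit × List Bool => p.2.length.unpair.2.unpair.2 :=
    snd.comp (Primrec.unpair.comp hm)
  have hg : Primrec₂ gIsCode :=
    (option_some.comp (Primrec.ite (PrimrecRel.comp Primrec.eq hk (const 0))
      (const true)
      (Primrec.ite (PrimrecRel.comp Primrec.eq hk (const 1))
        (PrimrecRel.comp Primrec.eq hm (const 0)).decide
        (Primrec.ite ((PrimrecRel.comp Primrec.eq hk (const 2)).or
            (PrimrecRel.comp Primrec.eq hk (const 6)))
          ((Primrec.list_getD false).comp snd hm)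
          (Primrec.ite (PrimrecRel.comp Primrec.nat_le hk (const 5))
            (Primrec.and.comp ((Primrec.list_getD false).comp snd hm1)
              ((Primrec.list_getD false).comp snd hm2))
            (const false)))))).to₂
  have H : ∀ (u : Unit) (n : ℕ),
      gIsCode u ((List.range n).map isCodeC) = some (isCodeC n) := by
    intro _ n
    simp only [gIsCode, List.length_map, List.length_range]
    congr 1
    by_cases h0 : n.unpair.1 = 0
    · rw [if_pos h0, isCodeC, if_pos h0]
    · rw [if_neg h0]
      by_cases h1 : n.unpair.1 = 1
      · rw [if_pos h1, isCodeC, if_neg h0, if_pos h1]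
      · rw [if_neg h1]
        by_cases h26 : n.unpair.1 = 2 ∨ n.unpair.1 = 6
        · rw [if_pos h26, isCodeC, if_neg h0, if_neg h1, if_pos h26,
            getD_map_range' _ (unpair2_lt (by omega)) _]
        · rw [if_neg h26]
          by_cases h5 : n.unpair.1 ≤ 5
          · rw [if_pos h5, isCodeC, if_neg h0, if_neg h1, if_neg h26, if_pos h5,
              getD_map_range' _ (lt_of_le_of_lt (Nat.unpair_left_le _) (unpair2_lt (by omega))) _,
              getD_map_range' _ (lt_of_le_of_lt (Nat.unpair_right_le _) (unpair2_lt (by omega))) _]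
          · rw [if_neg h5, isCodeC, if_neg h0, if_neg h1, if_neg h26, if_neg h5]
  exact (Primrec.nat_strong_rec _ hg H).comp (const ()) .id

end MFD
-- Section H : primrec for stepT, tabT, mainF ; final theorem
namespace MFD

open Primrec

theorem primrec_stepT : Primrec₂ stepT := by
  have hboC2 : ∀ {γ : Type} [Primcodable γ], Primrec₂ fun (_ : γ) (c : ℕ) => boC c :=
    fun {γ} _ => (primrec_boC.comp snd).to₂
  -- outer list : subl (dd (atomsC φ))
  have hats : Primrec fun p : ℕ × List Bool => subl (dd (atomsC p.1)) :=
    primrec_subl.comp (primrec_dd.comp (primrec_atomsC.comp fst))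
  -- body, over q : (ℕ × List Bool) × List ℕ
  have hS : Primrec fun q : (ℕ × List Bool) × List ℕ => q.2.filterMap boC :=
    Primrec.listFilterMap snd hboC2
  have hT : Primrec fun q : (ℕ × List Bool) × List ℕ => q.1.2 := snd.comp fst
  have hpart1 : Primrec fun q : (ℕ × List Bool) × List ℕ =>
      (subl (q.2.filterMap boC)).all fun S' => !(q.1.2.getD (negC (conjC S')) false) := by
    apply primrec_all (primrec_subl.comp hS)
    exact (Primrec.not.comp ((Primrec.list_getD false).comp (hT.comp fst)
      (primrec_negC.comp (primrec_conjC.comp snd)))).to₂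
  have hSr : Primrec fun r : ((ℕ × List Bool) × List ℕ) × ℕ => r.1.2.filterMap boC :=
    Primrec.listFilterMap (snd.comp fst) hboC2
  have h3b : Primrec₂ fun (r : ((ℕ × List Bool) × List ℕ) × ℕ) (S' : List ℕ) =>
      !(r.1.1.2.getD (iffC r.2 (conjC S')) false) :=
    (Primrec.not.comp ((Primrec.list_getD false).comp ((snd.comp (fst.comp fst)).comp fst)
      (primrec_iffC.comp (snd.comp fst) (primrec_conjC.comp snd)))).to₂
  have hpart2 : Primrec fun q : (ℕ × List Bool) × List ℕ =>
      ((dd (atomsC q.1.1)).filterMap boC).all fun C =>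
        decide (C ∈ q.2.filterMap boC) ||
          (subl (q.2.filterMap boC)).all fun S' =>
            !(q.1.2.getD (iffC C (conjC S')) false) := by
    apply primrec_all
      (Primrec.listFilterMap (primrec_dd.comp (primrec_atomsC.comp (fst.comp fst))) hboC2)
    exact (Primrec.or.comp (primrec_mem.comp snd hSr).decide
      (primrec_all (primrec_subl.comp hSr) h3b)).to₂
  have hpart3 : Primrec fun q : (ℕ × List Bool) × List ℕ => pevalC q.2 q.1.1 :=
    primrec_pevalC.comp snd (fst.comp fst)
  exact (primrec_all hats
    ((Primrec.or.comp (Primrec.not.comp hpart1)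
      (Primrec.or.comp (Primrec.not.comp hpart2) hpart3)).to₂)).to₂

theorem primrec_queryList : Primrec queryList := by
  have hboC2 : ∀ {γ : Type} [Primcodable γ], Primrec₂ fun (_ : γ) (c : ℕ) => boC c :=
    fun {γ} _ => (primrec_boC.comp snd).to₂
  have hbops : Primrec fun φ : ℕ => (dd (atomsC φ)).filterMap boC :=
    Primrec.listFilterMap (primrec_dd.comp primrec_atomsC) hboC2
  have hgg : Primrec₂ fun (q : ℕ × List ℕ) (C : ℕ) => iffC C (conjC q.2) :=
    (primrec_iffC.comp snd (primrec_conjC.comp (snd.comp fst))).to₂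
  exact Primrec.list_flatMap (primrec_subl.comp hbops)
    ((Primrec.list_cons.comp (primrec_negC.comp (primrec_conjC.comp snd))
      (Primrec.list_map (hbops.comp fst) hgg)).to₂)

theorem primrec_maxL : Primrec maxL :=
  Primrec.list_foldr .id (const 0)
    ((Primrec.nat_max.comp (fst.comp snd) (snd.comp snd)).to₂)

theorem primrec_betaC : Primrec betaC :=
  primrec_maxL.comp (Primrec.list_flatMap (Primrec.list_range.comp succ)
    ((primrec_queryList.comp snd).to₂))

theorem bIter_eq_rec (M k : ℕ) :
    bIter M k = Nat.rec (motive := fun _ => ℕ) M (fun _ ih => betaC ih) k := by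
  induction k with
  | zero => rfl
  | succ k ih => rw [bIter_succ', ih]

theorem primrec_bIter : Primrec₂ bIter := by
  have h := Primrec.nat_rec (f := fun M : ℕ => M)
    (g := fun (_ : ℕ) (p : ℕ × ℕ) => betaC p.2) .id ((primrec_betaC.comp (snd.comp snd)).to₂)
  exact h.of_eq fun M k => (bIter_eq_rec M k).symm

theorem tabT_eq_rec (n : ℕ) : ∀ k, tabT n k = Nat.rec (motive := fun _ => List Bool)
    (List.replicate (bIter n (n + 1) + 1) false)
    (fun k T => (List.range (bIter n (n - k) + 1)).map fun φ => stepT φ T) k := by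
  intro k
  induction k with
  | zero => rfl
  | succ k ih =>
    rw [show tabT n (k + 1) =
      (List.range (bIter n (n - k) + 1)).map (fun φ => stepT φ (tabT n k)) from rfl, ih]

theorem primrec_tabT : Primrec fun n => tabT n (n + 1) := by
  have hrepl : Primrec fun n : ℕ => List.replicate (bIter n (n + 1) + 1) false := by
    have hlen : Primrec fun n : ℕ => bIter n (n + 1) + 1 :=
      succ.comp (primrec_bIter.comp .id succ)
    have h := Primrec.list_map (Primrec.list_range.comp hlen)
      (Primrec₂.const false)
    refine h.of_eq fun n => ?_
    rw [List.map_const', List.length_range]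
  have hg : Primrec₂ fun (q : ℕ × (ℕ × List Bool)) (φ : ℕ) => stepT φ q.2.2 :=
    (primrec_stepT.comp snd ((snd.comp snd).comp fst)).to₂
  have hstep : Primrec₂ fun (n : ℕ) (p : ℕ × List Bool) =>
      (List.range (bIter n (n - p.1) + 1)).map fun φ => stepT φ p.2 :=
    (Primrec.list_map (Primrec.list_range.comp (succ.comp
      (primrec_bIter.comp fst (Primrec.nat_sub.comp fst (fst.comp snd))))) hg).to₂
  have h := Primrec.nat_rec' (f := fun n : ℕ => n + 1) succ hrepl hstep
  exact h.of_eq fun n => (tabT_eq_rec n (n + 1)).symm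

theorem primrec_mainF : Primrec mainF :=
  Primrec.and.comp primrec_isCodeC
    ((Primrec.list_getD false).comp primrec_tabT .id)

end MFD

/-- Decidability of ECNP: the set of Gödel numbers of ECNP-derivable formulas
is a decidable (computable) predicate. -/
theorem ECNP_decidable :
    ComputablePred (fun n : ℕ => ∃ A : MF, encodeMF A = n ∧ ECNP A) := by
  rw [ComputablePred.computable_iff]
  refine ⟨MFD.mainF, MFD.primrec_mainF.to_comp, funext fun n => propext ?_⟩
  rw [← MFD.mainF_correct n]
end

section
/- Adding the rule Ros to EN yields exactly ENP: a modal formula is derivable in the system obtained from EN by adding the rule Ros (from ¬A infer ¬□A) if and only if it is derivable in the logic ENP (EN plus the axiom ¬□⊥). -/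
/-- The logic ENP: EN plus the axiom ¬□⊥. -/
inductive ENP : MF → Prop
  | taut {A : MF} : A.Tautology → ENP A
  | axP : ENP MF.bot.box.neg
  | mp {A B : MF} : ENP (A.imp B) → ENP A → ENP B
  | nec {A : MF} : ENP A → ENP A.box
  | re {A B : MF} : ENP (A.iff B) → ENP (A.box.iff B.box)

/-- The system EN + Ros: EN together with the rule Ros (from ¬A infer ¬□A). -/
inductive ENRos : MF → Prop
  | taut {A : MF} : A.Tautology → ENRos A
  | mp {A B : MF} : ENRos (A.imp B) → ENRos A → ENRos B
  | nec {A : MF} : ENRos A → ENRos A.box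
  | re {A B : MF} : ENRos (A.iff B) → ENRos (A.box.iff B.box)
  | ros {A : MF} : ENRos A.neg → ENRos A.box.neg

/-- Adding the rule Ros to EN yields exactly ENP. -/
theorem ENRos_iff_ENP (A : MF) : ENRos A ↔ ENP A := by
  constructor
  · intro h
    induction h with
    | taut ht => exact ENP.taut ht
    | mp _ _ ihAB ihA => exact ENP.mp ihAB ihA
    | nec _ ih => exact ENP.nec ih
    | re _ ih => exact ENP.re ih
    | ros _ ih =>
      rename_i B _
      have h1 : ENP (B.iff MF.bot) := by
        apply ENP.mp (A := B.neg) _ ih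
        apply ENP.taut
        intro v
        simp [MF.peval, MF.iff]
      have h2 := ENP.re h1
      apply ENP.mp (A := MF.bot.box.neg) _ ENP.axP
      apply ENP.mp (A := (B.box.iff MF.bot.box)) _ h2
      apply ENP.taut
      intro v
      simp [MF.peval, MF.iff]
      cases v B.box <;> cases v MF.bot.box <;> simp
  · intro h
    induction h with
    | taut ht => exact ENRos.taut ht
    | axP =>
      apply ENRos.ros
      apply ENRos.taut
      intro v
      simp [MF.peval]
    | mp _ _ ihAB ihA => exact ENRos.mp ihAB ihA
    | nec _ ih => exact ENRos.nec ih
    | re _ ih => exact ENRos.re ih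
end
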